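/- arXiv:1710.05870 — 5 statements merged into one kernel-verified Lean document; each statement's English description precedes it below -/
import Mathlib

section
/- For C, D > 0, ∫₀^∞ t^{-1/4} / ((C+t)(D+t)) dt = π√2 / (C^{1/4} (√C + √D)(C^{1/4} + D^{1/4}) D^{1/4}). -/
open Real MeasureTheory Set

lemma betaReal_integrable {u v : ℝ} (hu : 0 < u) (hv : 0 < v) :
    IntegrableOn (fun x : ℝ => x ^ (u-1) * (1-x) ^ (v-1)) (Ioo (0:ℝ) 1) := by
  have h := (Complex.betaIntegral_convergent (u := (u:ℂ)) (v := (v:ℂ)) (by simpa) (by simpa)).1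
  have h2 : IntegrableOn (fun x : ℝ => (((x:ℂ) ^ ((u:ℂ)-1) * (1-(x:ℂ)) ^ ((v:ℂ)-1)).re)) (Ioo (0:ℝ) 1) :=
    (h.mono_set Ioo_subset_Ioc_self).re
  refine h2.congr_fun (fun x hx => ?_) measurableSet_Ioo
  obtain ⟨hx0, hx1⟩ := hx
  beta_reduce
  rw [show ((u:ℂ) - 1) = ((u - 1 : ℝ) : ℂ) by push_cast; ring,
      show ((v:ℂ) - 1) = ((v - 1 : ℝ) : ℂ) by push_cast; ring,
      show ((1:ℂ) - x) = ((1 - x : ℝ) : ℂ) by push_cast; ring,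
      ← Complex.ofReal_cpow hx0.le, ← Complex.ofReal_cpow (by linarith),
      ← Complex.ofReal_mul, Complex.ofReal_re]

lemma betaReal {u v : ℝ} (hu : 0 < u) (hv : 0 < v) :
    ∫ x in Ioo (0:ℝ) 1, x ^ (u-1) * (1-x) ^ (v-1)
      = Real.Gamma u * Real.Gamma v / Real.Gamma (u+v) := by
  have h := Complex.Gamma_mul_Gamma_eq_betaIntegral (s := (u:ℂ)) (t := (v:ℂ)) (by simpa) (by simpa)
  rw [Complex.betaIntegral] at h
  have hne : Complex.Gamma ((u:ℂ)+(v:ℂ)) ≠ 0 := Complex.Gamma_ne_zero_of_re_pos (by simp; positivity)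
  have heq : (∫ x in (0:ℝ)..1, (x:ℂ) ^ ((u:ℂ)-1) * (1-(x:ℂ)) ^ ((v:ℂ)-1))
      = ((∫ x in Ioo (0:ℝ) 1, x ^ (u-1) * (1-x) ^ (v-1) : ℝ) : ℂ) := by
    rw [intervalIntegral.integral_of_le zero_le_one, MeasureTheory.integral_Ioc_eq_integral_Ioo]
    have : ∀ x ∈ Ioo (0:ℝ) 1, (x:ℂ) ^ ((u:ℂ)-1) * (1-(x:ℂ)) ^ ((v:ℂ)-1)
        = ((x ^ (u-1) * (1-x) ^ (v-1) : ℝ) : ℂ) := by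
      intro x hx
      obtain ⟨hx0, hx1⟩ := hx
      rw [show ((u:ℂ) - 1) = ((u - 1 : ℝ) : ℂ) by push_cast; ring,
      show ((v:ℂ) - 1) = ((v - 1 : ℝ) : ℂ) by push_cast; ring,
      show ((1:ℂ) - x) = ((1 - x : ℝ) : ℂ) by push_cast; ring,
      ← Complex.ofReal_cpow hx0.le, ← Complex.ofReal_cpow (by linarith),
      ← Complex.ofReal_mul]
    rw [setIntegral_congr_fun measurableSet_Ioo this]
    exact integral_ofReal
  rw [heq] at h
  have key : ((∫ x in Ioo (0:ℝ) 1, x ^ (u-1) * (1-x) ^ (v-1) : ℝ) : ℂ)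
      = Complex.Gamma u * Complex.Gamma v / Complex.Gamma ((u:ℂ)+(v:ℂ)) := by
    rw [eq_div_iff hne]; linear_combination -h
  rw [show ((u:ℂ)+(v:ℂ)) = ((u+v:ℝ):ℂ) by push_cast; ring, Complex.Gamma_ofReal,
    Complex.Gamma_ofReal, Complex.Gamma_ofReal] at key
  exact_mod_cast key

lemma f_img {a : ℝ} (ha : 0 < a) : (fun x : ℝ => a*x/(1-x)) '' Ioo 0 1 = Ioi 0 := by
  ext y
  constructor
  · rintro ⟨x, ⟨hx0, hx1⟩, rfl⟩
    have : (0:ℝ) < 1 - x := by linarith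
    exact div_pos (by positivity) this
  · intro hy
    rw [mem_Ioi] at hy
    refine ⟨y/(a+y), ⟨by positivity, by rw [div_lt_one (by positivity)]; linarith⟩, ?_⟩
    have hay : a + y ≠ 0 := by positivity
    simp only
    rw [show 1 - y/(a+y) = a/(a+y) by field_simp; ring]
    field_simp
lemma f_deriv {a : ℝ} (x : ℝ) (hx : x ∈ Ioo (0:ℝ) 1) : HasDerivWithinAt (fun x : ℝ => a*x/(1-x))
    (a/(1-x)^2) (Ioo 0 1) x := by
  obtain ⟨hx0, hx1⟩ := hx
  have h1x : (1:ℝ) - x ≠ 0 := by intro h; linarith [sub_eq_zero.mp h]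
  have := (((hasDerivAt_id x).const_mul a).div ((hasDerivAt_id x).const_sub 1) h1x)
  refine this.hasDerivWithinAt.congr_deriv ?_
  simp only [id]
  ring
lemma f_inj {a : ℝ} (ha : 0 < a) : InjOn (fun x : ℝ => a*x/(1-x)) (Ioo 0 1) := by
  rintro x ⟨hx0, hx1⟩ y ⟨hy0, hy1⟩ h
  simp only [div_eq_div_iff (by linarith : (1:ℝ) - x ≠ 0) (by linarith : (1:ℝ) - y ≠ 0)] at h
  nlinarith [h]

lemma pt1 {a : ℝ} (ha : 0 < a) (x : ℝ) (hx : x ∈ Ioo (0:ℝ) 1) :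
    |a/(1-x)^2| * ((a*x/(1-x)) ^ (-(1/4):ℝ) / (a + a*x/(1-x)))
      = a ^ (-(1/4):ℝ) * (x ^ ((3:ℝ)/4-1) * (1-x) ^ ((1:ℝ)/4-1)) := by
  obtain ⟨hx0, hx1⟩ := hx
  have h1x : (0:ℝ) < 1 - x := by linarith
  rw [abs_of_pos (by positivity), show a + a*x/(1-x) = a/(1-x) by field_simp; ring,
    Real.div_rpow (by positivity) h1x.le, Real.mul_rpow ha.le hx0.le,
    show ((3:ℝ)/4 - 1) = -(1/4) by norm_num, show ((1:ℝ)/4-1) = -(3/4) by norm_num]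
  have key : (1-x) ^ (-(3/4):ℝ) = (1-x) / ((1-x)^2 * (1-x) ^ (-(1/4):ℝ)) := by
    rw [eq_div_iff (by positivity), ← Real.rpow_natCast (1-x) 2, ← Real.rpow_add h1x,
      ← Real.rpow_add h1x]
    norm_num
  rw [key]
  have h1 : x ^ (-(1/4):ℝ) ≠ 0 := by positivity
  have h2 : a ^ (-(1/4):ℝ) ≠ 0 := by positivity
  have h3 : (1-x) ^ (-(1/4):ℝ) ≠ 0 := by positivity
  field_simp

lemma pt2 {a : ℝ} (ha : 0 < a) (x : ℝ) (hx : x ∈ Ioo (0:ℝ) 1) :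
    |a/(1-x)^2| * ((a*x/(1-x)) ^ (-(1/4):ℝ) / ((a + a*x/(1-x)) * (a + a*x/(1-x))))
      = a ^ (-(5/4):ℝ) * (x ^ ((3:ℝ)/4-1) * (1-x) ^ ((5:ℝ)/4-1)) := by
  obtain ⟨hx0, hx1⟩ := hx
  have h1x : (0:ℝ) < 1 - x := by linarith
  rw [abs_of_pos (by positivity), show a + a*x/(1-x) = a/(1-x) by field_simp; ring,
    Real.div_rpow (by positivity) h1x.le, Real.mul_rpow ha.le hx0.le,
    show ((3:ℝ)/4 - 1) = -(1/4) by norm_num, show ((5:ℝ)/4-1) = (1/4:ℝ) by norm_num]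
  have key2 : a ^ (-(5/4):ℝ) = a * a ^ (-(1/4):ℝ) / a^2 := by
    rw [eq_div_iff (by positivity), ← Real.rpow_natCast a 2, ← Real.rpow_add ha,
      show a * a ^ (-(1/4):ℝ) = a ^ (1:ℝ) * a ^ (-(1/4):ℝ) by rw [Real.rpow_one],
      ← Real.rpow_add ha]
    norm_num
  have key3 : (1-x) ^ ((1:ℝ)/4) * (1-x) ^ ((-1/4):ℝ) = 1 := by
    rw [← Real.rpow_add h1x]; norm_num
  rw [key2, show (-(1/4):ℝ) = ((-1/4):ℝ) by norm_num]
  have h1 : x ^ ((-1/4):ℝ) ≠ 0 := by positivity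
  have h3 : (1-x) ^ ((-1/4):ℝ) ≠ 0 := by positivity
  field_simp
  rw [show (-(1/4):ℝ) = ((-1/4):ℝ) by norm_num, mul_comm, key3]

lemma beta_val1 : Real.Gamma (3/4) * Real.Gamma (1/4) / Real.Gamma (3/4 + 1/4) = π * Real.sqrt 2 := by
  have h := Real.Gamma_mul_Gamma_one_sub (1/4) 
  rw [show (1:ℝ) - 1/4 = 3/4 by norm_num, show π * (1/4) = π/4 by ring, Real.sin_pi_div_four] at h
  rw [show (3/4 : ℝ) + 1/4 = 1 by norm_num, Real.Gamma_one, div_one, mul_comm, h]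
  have h2 : Real.sqrt 2 ≠ 0 := by positivity
  have h3 : Real.sqrt 2 * Real.sqrt 2 = 2 := Real.mul_self_sqrt (by norm_num)
  field_simp
  linear_combination (-1) * h3

lemma beta_val2 : Real.Gamma (3/4) * Real.Gamma (5/4) / Real.Gamma (3/4 + 5/4) = π * Real.sqrt 2 / 4 := by
  have h5 : Real.Gamma (5/4) = (1/4) * Real.Gamma (1/4) := by
    rw [show (5/4:ℝ) = 1/4 + 1 by norm_num, Real.Gamma_add_one (by norm_num)]
  rw [show (3/4 : ℝ) + 5/4 = 2 by norm_num, Real.Gamma_two, div_one, h5]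
  have := beta_val1
  rw [show (3/4 : ℝ) + 1/4 = 1 by norm_num, Real.Gamma_one, div_one] at this
  linear_combination (1/4) * this

lemma int1 {a : ℝ} (ha : 0 < a) :
    IntegrableOn (fun t : ℝ => t ^ (-(1/4):ℝ) / (a + t)) (Ioi 0) := by
  rw [← f_img ha,
    integrableOn_image_iff_integrableOn_abs_deriv_smul measurableSet_Ioo f_deriv (f_inj ha)]
  have hb : IntegrableOn (fun x : ℝ => a ^ (-(1/4):ℝ) * (x ^ ((3:ℝ)/4-1) * (1-x) ^ ((1:ℝ)/4-1)))
      (Ioo (0:ℝ) 1) :=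
    (betaReal_integrable (u := 3/4) (v := 1/4) (by norm_num) (by norm_num)).const_mul _
  exact hb.congr_fun (fun x hx => by rw [smul_eq_mul, pt1 ha x hx]) measurableSet_Ioo

lemma val1 {a : ℝ} (ha : 0 < a) :
    ∫ t in Ioi (0:ℝ), t ^ (-(1/4):ℝ) / (a + t) = π * Real.sqrt 2 / a ^ ((1:ℝ)/4) := by
  rw [← f_img ha,
    integral_image_eq_integral_abs_deriv_smul measurableSet_Ioo f_deriv (f_inj ha),
    setIntegral_congr_fun measurableSet_Ioo (fun x hx => by rw [smul_eq_mul, pt1 ha x hx]),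
    MeasureTheory.integral_const_mul, betaReal (by norm_num) (by norm_num), beta_val1,
    Real.rpow_neg ha.le, inv_mul_eq_div]

lemma int2 {a : ℝ} (ha : 0 < a) :
    IntegrableOn (fun t : ℝ => t ^ (-(1/4):ℝ) / ((a + t) * (a + t))) (Ioi 0) := by
  rw [← f_img ha,
    integrableOn_image_iff_integrableOn_abs_deriv_smul measurableSet_Ioo f_deriv (f_inj ha)]
  have hb : IntegrableOn (fun x : ℝ => a ^ (-(5/4):ℝ) * (x ^ ((3:ℝ)/4-1) * (1-x) ^ ((5:ℝ)/4-1)))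
      (Ioo (0:ℝ) 1) :=
    (betaReal_integrable (u := 3/4) (v := 5/4) (by norm_num) (by norm_num)).const_mul _
  exact hb.congr_fun (fun x hx => by rw [smul_eq_mul, pt2 ha x hx]) measurableSet_Ioo

lemma val2 {a : ℝ} (ha : 0 < a) :
    ∫ t in Ioi (0:ℝ), t ^ (-(1/4):ℝ) / ((a + t) * (a + t))
      = a ^ (-(5/4):ℝ) * (π * Real.sqrt 2 / 4) := by
  rw [← f_img ha,
    integral_image_eq_integral_abs_deriv_smul measurableSet_Ioo f_deriv (f_inj ha),
    setIntegral_congr_fun measurableSet_Ioo (fun x hx => by rw [smul_eq_mul, pt2 ha x hx]),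
    MeasureTheory.integral_const_mul, betaReal (by norm_num) (by norm_num), beta_val2]

theorem integral_rpow_neg_quarter_div (C D : ℝ) (hC : 0 < C) (hD : 0 < D) :
    ∫ t in Set.Ioi (0:ℝ), t ^ (-(1/4) : ℝ) / ((C + t) * (D + t))
      = π * Real.sqrt 2 /
          (C ^ ((1:ℝ)/4) * (Real.sqrt C + Real.sqrt D) *
            (C ^ ((1:ℝ)/4) + D ^ ((1:ℝ)/4)) * D ^ ((1:ℝ)/4)) := by
  by_cases hCD : C = D
  · subst hCD
    rw [val2 hC, Real.sqrt_eq_rpow C]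
    have h54 : C ^ ((1:ℝ)/4) * (C^((1:ℝ)/2)+C^((1:ℝ)/2)) * (C^((1:ℝ)/4)+C^((1:ℝ)/4)) * C^((1:ℝ)/4)
        = 4 * C ^ ((5:ℝ)/4) := by
      rw [show C ^ ((1:ℝ)/4) * (C^((1:ℝ)/2)+C^((1:ℝ)/2)) * (C^((1:ℝ)/4)+C^((1:ℝ)/4)) * C^((1:ℝ)/4)
          = 4 * (C^((1:ℝ)/4) * C^((1:ℝ)/2) * C^((1:ℝ)/4) * C^((1:ℝ)/4)) by ring,
        ← Real.rpow_add hC, ← Real.rpow_add hC, ← Real.rpow_add hC]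
      norm_num
    rw [h54, show (-(5/4):ℝ) = -((5:ℝ)/4) by norm_num, Real.rpow_neg hC.le]
    have h5 : C ^ ((5:ℝ)/4) ≠ 0 := by positivity
    field_simp
  · have hsub : ∀ t ∈ Ioi (0:ℝ), t ^ (-(1/4):ℝ)/((C+t)*(D+t))
        = (1/(D-C)) * (t ^ (-(1/4):ℝ)/(C+t) - t ^ (-(1/4):ℝ)/(D+t)) := by
      intro t ht
      rw [mem_Ioi] at ht
      have h1 : C + t ≠ 0 := by positivity
      have h2 : D + t ≠ 0 := by positivity
      have h3 : D - C ≠ 0 := sub_ne_zero.mpr (fun h => hCD h.symm)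
      field_simp
      ring
    rw [setIntegral_congr_fun measurableSet_Ioi hsub, MeasureTheory.integral_const_mul,
      integral_sub (int1 hC) (int1 hD), val1 hC, val1 hD]
    set c := C ^ ((1:ℝ)/4) with hc
    set d := D ^ ((1:ℝ)/4) with hd
    have hcpos : 0 < c := by rw [hc]; positivity
    have hdpos : 0 < d := by rw [hd]; positivity
    have hC4 : C = c^4 := by
      rw [hc, ← Real.rpow_natCast (C ^ ((1:ℝ)/4)) 4, ← Real.rpow_mul hC.le]
      norm_num
    have hD4 : D = d^4 := by
      rw [hd, ← Real.rpow_natCast (D ^ ((1:ℝ)/4)) 4, ← Real.rpow_mul hD.le]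
      norm_num
    have hsC : Real.sqrt C = c^2 := by
      rw [Real.sqrt_eq_rpow, hc, ← Real.rpow_natCast (C ^ ((1:ℝ)/4)) 2, ← Real.rpow_mul hC.le]
      norm_num
    have hsD : Real.sqrt D = d^2 := by
      rw [Real.sqrt_eq_rpow, hd, ← Real.rpow_natCast (D ^ ((1:ℝ)/4)) 2, ← Real.rpow_mul hD.le]
      norm_num
    rw [hsC, hsD, hC4, hD4]
    have hne : d^4 - c^4 ≠ 0 := sub_ne_zero.mpr (by rw [← hC4, ← hD4]; exact fun h => hCD h.symm)
    have h1 : c ≠ 0 := ne_of_gt hcpos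
    have h2 : d ≠ 0 := ne_of_gt hdpos
    have h3 : c + d ≠ 0 := by positivity
    have h4 : c^2 + d^2 ≠ 0 := by positivity
    field_simp
    ring
end

section
/- For β ∈ (-1/2,1/2) and γ, δ > 0, the integral operator Q on L²((0,∞)) with kernel Q(u,v) = u^{(1/2-β)γ - 1/2} v^{(1/2+β)δ - 1/2} / (u^γ + v^δ) is bounded with norm at most (1/√(γδ)) · π/cos(βπ). -/
open Real MeasureTheory Set
open scoped ENNReal NNReal

set_option linter.unusedVariables false


private lemma beta_val {s : ℝ} (hs : s ∈ Ioo (0:ℝ) 1) :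
    ∫ x in (0:ℝ)..1, x ^ (s-1) * (1-x) ^ (-s) = π / Real.sin (π * s) := by
  have h0 : (0:ℝ) < s := hs.1
  have h1 : s < 1 := hs.2
  have hre : 0 < (s:ℂ).re := by simpa using h0
  have hre' : 0 < (1 - (s:ℂ)).re := by simp [Complex.sub_re]; linarith
  have hβ : Complex.betaIntegral s (1-s) = ((π / Real.sin (π * s) : ℝ) : ℂ) := by
    have := Complex.Gamma_mul_Gamma_eq_betaIntegral hre hre'
    rw [add_sub_cancel, Complex.Gamma_one, one_mul] at this
    rw [← this, Complex.Gamma_mul_Gamma_one_sub]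
    push_cast [Complex.ofReal_sin]
    ring_nf
  have heq : ∀ x ∈ uIcc (0:ℝ) 1,
      ((x:ℂ) ^ ((s:ℂ) - 1) * (1 - (x:ℂ)) ^ ((1:ℂ) - s - 1))
      = ((x ^ (s-1) * (1-x) ^ (-s) : ℝ) : ℂ) := by
    intro x hx
    rw [uIcc_of_le (by norm_num)] at hx
    have hx0 : 0 ≤ x := hx.1
    have hx1 : 0 ≤ 1 - x := by linarith [hx.2]
    rw [Complex.ofReal_mul, Complex.ofReal_cpow hx0, Complex.ofReal_cpow hx1]
    push_cast
    ring_nf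
  have := hβ
  rw [Complex.betaIntegral, intervalIntegral.integral_congr heq,
    intervalIntegral.integral_ofReal] at this
  exact_mod_cast this

private lemma beta_integrable {s : ℝ} (hs : s ∈ Ioo (0:ℝ) 1) :
    IntegrableOn (fun x : ℝ => x ^ (s-1) * (1-x) ^ (-s)) (Ioo 0 1) := by
  have h0 : (0:ℝ) < s := hs.1
  have h1 : s < 1 := hs.2
  have hre : 0 < (s:ℂ).re := by simpa using h0
  have hre' : 0 < (1 - (s:ℂ)).re := by simp [Complex.sub_re]; linarith
  have hc := Complex.betaIntegral_convergent hre hre'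
  have hio : IntegrableOn (fun x : ℝ =>
      ((x:ℂ) ^ ((s:ℂ) - 1) * (1 - (x:ℂ)) ^ ((1:ℂ) - s - 1))) (Ioo 0 1) :=
    (integrableOn_Ioc_iff_integrableOn_Ioo).mp hc.1
  refine IntegrableOn.congr_fun hio.norm ?_ measurableSet_Ioo
  intro x hx
  have hx0 : 0 ≤ x := hx.1.le
  have hx1 : 0 ≤ 1 - x := by linarith [hx.2.le]
  have : ((x:ℂ) ^ ((s:ℂ) - 1) * (1 - (x:ℂ)) ^ ((1:ℂ) - s - 1))
      = ((x ^ (s-1) * (1-x) ^ (-s) : ℝ) : ℂ) := by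
    rw [Complex.ofReal_mul, Complex.ofReal_cpow hx0, Complex.ofReal_cpow hx1]
    push_cast; ring_nf
  simp only []; rw [this, Complex.norm_real, Real.norm_eq_abs, abs_of_nonneg (by positivity)]

section CoV
variable {s : ℝ}

private lemma cov_deriv : ∀ x ∈ Ioo (0:ℝ) 1,
    HasDerivWithinAt (fun x : ℝ => x / (1 - x)) (1/(1-x)^2) (Ioo 0 1) x := by
  intro x hx
  have h1 : (1:ℝ) - x ≠ 0 := by have := hx.2; intro h; nlinarith [hx.2]
  have : HasDerivAt (fun x : ℝ => x / (1 - x)) (1/(1-x)^2) x := by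
    have h := (hasDerivAt_id x).div ((hasDerivAt_id x).const_sub 1) h1
    refine h.congr_deriv ?_
    simp only [id]; ring
  exact this.hasDerivWithinAt

private lemma cov_inj : InjOn (fun x : ℝ => x / (1 - x)) (Ioo 0 1) := by
  intro a ha b hb hab
  have h1 : (1:ℝ) - a ≠ 0 := by have := ha.2; intro h; nlinarith
  have h2 : (1:ℝ) - b ≠ 0 := by have := hb.2; intro h; nlinarith
  field_simp at hab
  nlinarith [hab]

private lemma cov_image : (fun x : ℝ => x / (1 - x)) '' (Ioo 0 1) = Ioi 0 := by
  ext t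
  constructor
  · rintro ⟨x, hx, rfl⟩
    have h1 : (0:ℝ) < 1 - x := by linarith [hx.2]
    exact div_pos hx.1 h1
  · intro ht
    have ht' : (0:ℝ) < t := ht
    refine ⟨t / (1 + t), ⟨by positivity, ?_⟩, ?_⟩
    · rw [div_lt_one (by positivity)]; linarith
    · have h1 : (1:ℝ) + t ≠ 0 := by positivity
      field_simp
      ring

end CoV

private lemma halfline_eq {s : ℝ} (hs : s ∈ Ioo (0:ℝ) 1) :
    ∀ x ∈ Ioo (0:ℝ) 1, |1/(1-x)^2| • ((x / (1-x)) ^ (s-1) / (1 + x/(1-x)))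
      = x ^ (s-1) * (1-x) ^ (-s) := by
  intro x hx
  have hx0 : (0:ℝ) < x := hx.1
  have hy : (0:ℝ) < 1 - x := by linarith [hx.2]
  have h1 : 1 + x / (1-x) = 1 / (1-x) := by field_simp; ring
  have h2 : (x / (1-x)) ^ (s-1) = x ^ (s-1) / (1-x) ^ (s-1) :=
    Real.div_rpow hx0.le hy.le (s-1)
  have key : ((1-x):ℝ) ^ (s-1) * (1-x) ^ (-s) = (1-x)⁻¹ := by
    rw [← Real.rpow_add hy, show s - 1 + -s = (-1:ℝ) by ring, Real.rpow_neg_one]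
  have hys : (0:ℝ) < (1-x) ^ (s-1) := Real.rpow_pos_of_pos hy _
  have hyns : (0:ℝ) < (1-x) ^ (-s) := Real.rpow_pos_of_pos hy _
  rw [smul_eq_mul, h1, h2, abs_of_pos (by positivity)]
  have key2 : ((1-x):ℝ) ^ (-s) = (1-x)⁻¹ / (1-x) ^ (s-1) := by
    rw [eq_div_iff hys.ne', mul_comm, key]
  rw [key2]
  field_simp

private lemma halfline_integrable {s : ℝ} (hs : s ∈ Ioo (0:ℝ) 1)
    (hbeta : IntegrableOn (fun x : ℝ => x ^ (s-1) * (1-x) ^ (-s)) (Ioo 0 1)) :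
    IntegrableOn (fun t : ℝ => t ^ (s-1) / (1 + t)) (Ioi 0) := by
  have h := integrableOn_image_iff_integrableOn_abs_deriv_smul measurableSet_Ioo
    cov_deriv cov_inj (fun t : ℝ => t ^ (s-1) / (1 + t))
  rw [cov_image] at h
  rw [h]
  exact hbeta.congr_fun (fun x hx => (halfline_eq hs x hx).symm) measurableSet_Ioo

private lemma halfline_val {s : ℝ} (hs : s ∈ Ioo (0:ℝ) 1)
    (hbeta : ∫ x in (0:ℝ)..1, x ^ (s-1) * (1-x) ^ (-s) = π / Real.sin (π * s)) :
    ∫ t in Ioi (0:ℝ), t ^ (s-1) / (1 + t) = π / Real.sin (π * s) := by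
  rw [← cov_image, integral_image_eq_integral_abs_deriv_smul measurableSet_Ioo
    cov_deriv cov_inj]
  rw [setIntegral_congr_fun measurableSet_Ioo (fun x hx => halfline_eq hs x hx)]
  rw [← integral_Ioc_eq_integral_Ioo, ← intervalIntegral.integral_of_le (by norm_num : (0:ℝ) ≤ 1)]
  exact hbeta

section Scaled
variable {δ q c : ℝ}

private lemma scov_deriv (hδ : 0 < δ) (hc : 0 < c) : ∀ t ∈ Ioi (0:ℝ),
    HasDerivWithinAt (fun t : ℝ => (c*t) ^ (1/δ)) (c * (1/δ) * (c*t) ^ (1/δ - 1)) (Ioi 0) t := by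
  intro t ht
  have ht' : (0:ℝ) < t := ht
  have h : HasDerivAt (fun t : ℝ => (c*t) ^ (1/δ)) (c * (1/δ) * (c*t) ^ (1/δ - 1)) t := by
    have hmul : HasDerivAt (fun t : ℝ => c*t) c t := by
      simpa using (hasDerivAt_id t).const_mul c
    exact hmul.rpow_const (Or.inl (by positivity))
  exact h.hasDerivWithinAt

private lemma scov_inj (hδ : 0 < δ) (hc : 0 < c) :
    InjOn (fun t : ℝ => (c*t) ^ (1/δ)) (Ioi 0) := by
  intro a ha b hb hab
  have ha' : (0:ℝ) < a := ha
  have hb' : (0:ℝ) < b := hb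
  have h1 : c*a ∈ {y : ℝ | 0 ≤ y} := by simp; positivity
  have h2 : c*b ∈ {y : ℝ | 0 ≤ y} := by simp; positivity
  have := Real.rpow_left_injOn (x := 1/δ) (one_div_ne_zero hδ.ne') h1 h2 hab
  exact mul_left_cancel₀ hc.ne' this

private lemma scov_image (hδ : 0 < δ) (hc : 0 < c) :
    (fun t : ℝ => (c*t) ^ (1/δ)) '' (Ioi 0) = Ioi 0 := by
  ext v
  constructor
  · rintro ⟨t, ht, rfl⟩
    have ht' : (0:ℝ) < t := ht
    exact Real.rpow_pos_of_pos (by positivity) _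
  · intro hv
    have hv' : (0:ℝ) < v := hv
    have hvd : (0:ℝ) < v ^ δ := Real.rpow_pos_of_pos hv' _
    refine ⟨v ^ δ / c, mem_Ioi.2 (div_pos hvd hc), ?_⟩
    show (c * (v ^ δ / c)) ^ (1/δ) = v
    have : c * (v ^ δ / c) = v ^ δ := by field_simp
    rw [this, ← Real.rpow_mul hv'.le, mul_one_div, div_self hδ.ne', Real.rpow_one]

private lemma scaled_eq (hδ : 0 < δ) (hc : 0 < c) (q : ℝ) : ∀ t ∈ Ioi (0:ℝ),
    |c * (1/δ) * (c*t) ^ (1/δ - 1)| • (((c*t) ^ (1/δ)) ^ (q-1) / (c + ((c*t) ^ (1/δ)) ^ δ))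
      = c ^ (q/δ - 1) * (1/δ) * (t ^ (q/δ - 1) / (1 + t)) := by
  intro t ht
  have ht' : (0:ℝ) < t := ht
  have hct : (0:ℝ) < c*t := by positivity
  have e1 : ((c*t) ^ (1/δ)) ^ δ = c * t := by
    rw [← Real.rpow_mul hct.le, one_div, inv_mul_cancel₀ hδ.ne', Real.rpow_one]
  have e2 : ((c*t) ^ (1/δ)) ^ (q-1) = (c*t) ^ ((q-1)/δ) := by
    rw [← Real.rpow_mul hct.le, one_div_mul_eq_div]
  have e3 : c + c * t = c * (1 + t) := by ring
  rw [smul_eq_mul, e1, e2, e3, abs_of_pos (by positivity)]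
  rw [Real.mul_rpow hc.le ht'.le, Real.mul_rpow hc.le ht'.le]
  have e4 : c * (1/δ) * (c ^ (1/δ - 1) * t ^ (1/δ - 1)) *
      (c ^ ((q-1)/δ) * t ^ ((q-1)/δ) / (c * (1 + t)))
      = (1/δ) * ((c * c ^ (1/δ - 1) * c ^ ((q-1)/δ) / c) * (t ^ (1/δ - 1) * t ^ ((q-1)/δ)))
        / (1 + t) := by
    field_simp
  rw [e4]
  have e5 : c * c ^ (1/δ - 1) * c ^ ((q-1)/δ) / c = c ^ (q/δ - 1) := by
    rw [show c * c ^ (1/δ - 1) * c ^ ((q-1)/δ) / c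
        = c ^ (1:ℝ) * c ^ (1/δ - 1) * c ^ ((q-1)/δ) * (c ^ (1:ℝ))⁻¹ by
      rw [Real.rpow_one]; ring]
    rw [← Real.rpow_neg hc.le, ← Real.rpow_add hc, ← Real.rpow_add hc, ← Real.rpow_add hc]
    congr 1
    field_simp
    ring
  have e6 : t ^ (1/δ - 1) * t ^ ((q-1)/δ) = t ^ (q/δ - 1) := by
    rw [← Real.rpow_add ht']
    congr 1
    field_simp
    ring
  rw [e5, e6]
  ring

private lemma scaled_val (hδ : 0 < δ) (hc : 0 < c) (hq : q ∈ Ioo 0 δ) :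
    (∫ v in Ioi (0:ℝ), v ^ (q-1) / (c + v ^ δ))
      = c ^ (q/δ - 1) * ((1/δ) * (π / Real.sin (π * (q/δ)))) := by
  have hs : q/δ ∈ Ioo (0:ℝ) 1 := ⟨div_pos hq.1 hδ, (div_lt_one hδ).2 hq.2⟩
  rw [← scov_image hδ hc, integral_image_eq_integral_abs_deriv_smul measurableSet_Ioi
    (scov_deriv hδ hc) (scov_inj hδ hc)]
  rw [setIntegral_congr_fun measurableSet_Ioi (fun t ht => scaled_eq hδ hc q t ht)]
  rw [integral_const_mul, halfline_val hs (beta_val hs)]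
  ring

private lemma scaled_integrable (hδ : 0 < δ) (hc : 0 < c) (hq : q ∈ Ioo 0 δ) :
    IntegrableOn (fun v : ℝ => v ^ (q-1) / (c + v ^ δ)) (Ioi 0) := by
  have hs : q/δ ∈ Ioo (0:ℝ) 1 := ⟨div_pos hq.1 hδ, (div_lt_one hδ).2 hq.2⟩
  have h := integrableOn_image_iff_integrableOn_abs_deriv_smul measurableSet_Ioi
    (scov_deriv hδ hc) (scov_inj hδ hc) (fun v : ℝ => v ^ (q-1) / (c + v ^ δ))
  rw [scov_image hδ hc] at h
  rw [h]
  have hint := (halfline_integrable hs (beta_integrable hs)).const_mul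
    (c ^ (q/δ - 1) * (1/δ))
  refine IntegrableOn.congr_fun hint (fun t ht => ?_) measurableSet_Ioi
  rw [← scaled_eq hδ hc q t ht]

private lemma scaled_lint {δ q c : ℝ} (hδ : 0 < δ) (hc : 0 < c) (hq : q ∈ Ioo 0 δ) :
    ∫⁻ v in Ioi (0:ℝ), ENNReal.ofReal (v ^ (q-1) / (c + v ^ δ))
      = ENNReal.ofReal (c ^ (q/δ - 1) * ((1/δ) * (π / Real.sin (π * (q/δ))))) := by
  rw [← scaled_val hδ hc hq,
    ← ofReal_integral_eq_lintegral_ofReal (scaled_integrable hδ hc hq)]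
  exact (ae_restrict_iff' measurableSet_Ioi).2 (ae_of_all _ fun v hv => by
    have hv' : (0:ℝ) < v := hv
    have : (0:ℝ) < c + v ^ δ := by positivity
    positivity)

private lemma kern_lint {γ δ σ : ℝ} (hγ : 0 < γ) (hδ : 0 < δ) (hσ : σ ∈ Ioo (0:ℝ) 1)
    {u : ℝ} (hu : 0 < u) :
    ∫⁻ v in Ioi (0:ℝ), ENNReal.ofReal (v ^ (σ*δ - 1) / (u ^ γ + v ^ δ))
      = ENNReal.ofReal (u ^ (γ*(σ-1)) * ((1/δ) * (π / Real.sin (π * σ)))) := by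
  have hq : σ*δ ∈ Ioo 0 δ := by
    constructor
    · exact mul_pos hσ.1 hδ
    · nlinarith [hσ.2, hδ]
  have hcu : (0:ℝ) < u ^ γ := Real.rpow_pos_of_pos hu γ
  have h := scaled_lint hδ hcu hq
  have hqd : σ*δ/δ = σ := by field_simp
  rw [hqd] at h
  rw [Real.rpow_mul hu.le, h]


private theorem schur_core (β γ δ : ℝ) (hβ : β ∈ Set.Ioo (-(1/2) : ℝ) (1/2))
    (hγ : 0 < γ) (hδ : 0 < δ)
    (f : ℝ → ℝ) (hm : Measurable f) :
    eLpNorm (fun u : ℝ => ∫ v in Set.Ioi (0:ℝ),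
        (u ^ ((1/2 - β) * γ - 1/2) * v ^ ((1/2 + β) * δ - 1/2) / (u ^ γ + v ^ δ)) * f v) 2
        (volume.restrict (Set.Ioi 0))
      ≤ ENNReal.ofReal ((1 / Real.sqrt (γ * δ)) * (π / Real.cos (β * π))) *
          eLpNorm f 2 (volume.restrict (Set.Ioi 0)) := by
  set a : ℝ := (1/2 - β) * γ - 1/2 with ha
  set b : ℝ := (1/2 + β) * δ - 1/2 with hb
  set Q : ℝ → ℝ → ℝ := fun u v => u ^ a * v ^ b / (u ^ γ + v ^ δ) with hQ
  set K : ℝ → ℝ → ℝ≥0∞ := fun u v => ENNReal.ofReal (Q u v) with hK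
  set w : ℝ → ℝ≥0∞ := fun v => ENNReal.ofReal (v ^ (-(1/2) : ℝ)) with hw
  set F : ℝ → ℝ≥0∞ := fun v => (‖f v‖₊ : ℝ≥0∞) with hF
  have hβ1 : -(1/2) < β := hβ.1
  have hβ2 : β < 1/2 := hβ.2
  have hcos : (0:ℝ) < Real.cos (β * π) := by
    apply Real.cos_pos_of_mem_Ioo
    constructor <;> nlinarith [Real.pi_pos]
  set C₁ : ℝ := (1/δ) * (π / Real.cos (β*π)) with hC₁
  set C₂ : ℝ := (1/γ) * (π / Real.cos (β*π)) with hC₂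
  have hC₁pos : 0 < C₁ := by positivity
  have hC₂pos : 0 < C₂ := by positivity
  have hσ₁ : (1/2 + β) ∈ Ioo (0:ℝ) 1 := ⟨by linarith, by linarith⟩
  have hσ₂ : (1/2 - β) ∈ Ioo (0:ℝ) 1 := ⟨by linarith, by linarith⟩
  have hsin1 : Real.sin (π * (1/2 + β)) = Real.cos (β * π) := by
    rw [show π * (1/2 + β) = π/2 - (-(β*π)) by ring, Real.sin_pi_div_two_sub, Real.cos_neg]
  have hsin2 : Real.sin (π * (1/2 - β)) = Real.cos (β * π) := by
    rw [show π * (1/2 - β) = π/2 - β*π by ring, Real.sin_pi_div_two_sub]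
  -- positivity/nonnegativity facts
  have hQnn : ∀ u v : ℝ, 0 < u → 0 < v → 0 ≤ Q u v := by
    intro u v hu hv
    have h1 : (0:ℝ) < u ^ γ := Real.rpow_pos_of_pos hu _
    have h2 : (0:ℝ) < v ^ δ := Real.rpow_pos_of_pos hv _
    have h3 : (0:ℝ) ≤ u ^ a := Real.rpow_nonneg hu.le _
    have h4 : (0:ℝ) ≤ v ^ b := Real.rpow_nonneg hv.le _
    positivity
  -- row integral
  have hrow : ∀ u : ℝ, 0 < u →
      ∫⁻ v in Ioi (0:ℝ), K u v * w v = ENNReal.ofReal C₁ * ENNReal.ofReal (u ^ (-(1/2):ℝ)) := by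
    intro u hu
    have huγ : (0:ℝ) < u ^ γ := Real.rpow_pos_of_pos hu _
    have step1 : ∫⁻ v in Ioi (0:ℝ), K u v * w v
        = ∫⁻ v in Ioi (0:ℝ), ENNReal.ofReal (u ^ a)
            * ENNReal.ofReal (v ^ ((1/2+β)*δ - 1) / (u ^ γ + v ^ δ)) := by
      apply setLIntegral_congr_fun measurableSet_Ioi
      intro v hv
      have hv' : (0:ℝ) < v := hv
      have hvδ : (0:ℝ) < v ^ δ := Real.rpow_pos_of_pos hv' _
      rw [hK, hw]
      beta_reduce
      rw [← ENNReal.ofReal_mul (hQnn u v hu hv'),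
        ← ENNReal.ofReal_mul (Real.rpow_nonneg hu.le a)]
      congr 1
      have hvb : v ^ b * v ^ (-(1/2):ℝ) = v ^ ((1/2+β)*δ - 1) := by
        rw [← Real.rpow_add hv']
        congr 1
        rw [hb]; ring
      calc Q u v * v ^ (-(1/2):ℝ)
          = u ^ a * ((v ^ b * v ^ (-(1/2):ℝ)) / (u ^ γ + v ^ δ)) := by rw [hQ]; ring
        _ = u ^ a * (v ^ ((1/2+β)*δ - 1) / (u ^ γ + v ^ δ)) := by rw [hvb]
    rw [step1, lintegral_const_mul' _ _ ENNReal.ofReal_ne_top,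
      kern_lint hγ hδ hσ₁ hu,
      ← ENNReal.ofReal_mul (Real.rpow_nonneg hu.le a)]
    rw [← mul_assoc, ← Real.rpow_add hu, hsin1]
    have he : a + γ * (1/2 + β - 1) = -(1/2) := by rw [ha]; ring
    rw [he, ← ENNReal.ofReal_mul (by positivity : (0:ℝ) ≤ C₁), hC₁]
    congr 1
    ring
  -- column integral
  have hcol : ∀ v : ℝ, 0 < v →
      ∫⁻ u in Ioi (0:ℝ), K u v * ENNReal.ofReal (u ^ (-(1/2):ℝ))
        = ENNReal.ofReal C₂ * ENNReal.ofReal (v ^ (-(1/2):ℝ)) := by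
    intro v hv
    have hvδ : (0:ℝ) < v ^ δ := Real.rpow_pos_of_pos hv _
    have step1 : ∫⁻ u in Ioi (0:ℝ), K u v * ENNReal.ofReal (u ^ (-(1/2):ℝ))
        = ∫⁻ u in Ioi (0:ℝ), ENNReal.ofReal (v ^ b)
            * ENNReal.ofReal (u ^ ((1/2-β)*γ - 1) / (v ^ δ + u ^ γ)) := by
      apply setLIntegral_congr_fun measurableSet_Ioi
      intro u hu
      have hu' : (0:ℝ) < u := hu
      have huγ : (0:ℝ) < u ^ γ := Real.rpow_pos_of_pos hu' _
      rw [hK]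
      beta_reduce
      rw [← ENNReal.ofReal_mul (hQnn u v hu' hv),
        ← ENNReal.ofReal_mul (Real.rpow_nonneg hv.le b)]
      congr 1
      have hua : u ^ a * u ^ (-(1/2):ℝ) = u ^ ((1/2-β)*γ - 1) := by
        rw [← Real.rpow_add hu']
        congr 1
        rw [ha]; ring
      calc Q u v * u ^ (-(1/2):ℝ)
          = v ^ b * ((u ^ a * u ^ (-(1/2):ℝ)) / (v ^ δ + u ^ γ)) := by rw [hQ]; ring
        _ = v ^ b * (u ^ ((1/2-β)*γ - 1) / (v ^ δ + u ^ γ)) := by rw [hua]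
    rw [step1, lintegral_const_mul' _ _ ENNReal.ofReal_ne_top,
      kern_lint hδ hγ hσ₂ hv,
      ← ENNReal.ofReal_mul (Real.rpow_nonneg hv.le b)]
    rw [← mul_assoc, ← Real.rpow_add hv, hsin2]
    have he : b + δ * (1/2 - β - 1) = -(1/2) := by rw [hb]; ring
    rw [he, ← ENNReal.ofReal_mul (by positivity : (0:ℝ) ≤ C₂), hC₂]
    congr 1
    ring
  -- measurability
  have hwm : Measurable w := by
    rw [hw]; fun_prop
  have hFm : Measurable F := hm.nnnorm.coe_nnreal_ennreal
  have hKum : ∀ u, Measurable (K u) := by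
    intro u
    rw [hK, hQ]; fun_prop
  have hKvm : ∀ v, Measurable (fun u => K u v) := by
    intro v
    rw [hK, hQ]; fun_prop
  have hw0 : ∀ v : ℝ, 0 < v → w v ≠ 0 := fun v hv =>
    (ENNReal.ofReal_pos.2 (Real.rpow_pos_of_pos hv _)).ne'
  have hwt : ∀ v : ℝ, w v ≠ ⊤ := fun v => ENNReal.ofReal_ne_top
  have hFt : ∀ v : ℝ, F v ^ (2:ℝ) ≠ ⊤ :=
    fun v => ENNReal.rpow_ne_top_of_nonneg (by norm_num) ENNReal.coe_ne_top
  have hrpow2 : ∀ t : ℝ≥0∞, t ^ (2:ℝ) = t * t := fun t => by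
    rw [show (2:ℝ) = ((2:ℕ):ℝ) by norm_num, ENNReal.rpow_natCast, sq]
  have hhalf2 : ∀ t : ℝ≥0∞, (t ^ (1/2:ℝ)) ^ (2:ℝ) = t := fun t => by
    rw [← ENNReal.rpow_mul]; norm_num
  -- Step A : pointwise bound
  have stepA : ∀ u : ℝ, 0 < u →
      ((‖∫ v in Ioi (0:ℝ), Q u v * f v‖₊ : ℝ≥0∞)) ^ (2:ℝ)
        ≤ ENNReal.ofReal C₁ * (ENNReal.ofReal (u ^ (-(1/2):ℝ))
            * ∫⁻ v in Ioi (0:ℝ), (w v)⁻¹ * F v ^ (2:ℝ) * K u v) := by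
    intro u hu
    have h1 : ((‖∫ v in Ioi (0:ℝ), Q u v * f v‖₊ : ℝ≥0∞))
        ≤ ∫⁻ v in Ioi (0:ℝ), K u v * F v := by
      refine le_trans (enorm_integral_le_lintegral_enorm _) (le_of_eq ?_)
      apply setLIntegral_congr_fun measurableSet_Ioi
      intro v hv
      have hv' : (0:ℝ) < v := hv
      beta_reduce
      rw [enorm_mul, Real.enorm_eq_ofReal (hQnn u v hu hv')]
      rfl
    have hold : ∫⁻ v in Ioi (0:ℝ), K u v * F v
        ≤ (∫⁻ v in Ioi (0:ℝ), K u v * w v) ^ (1/2:ℝ)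
          * (∫⁻ v in Ioi (0:ℝ), (w v)⁻¹ * F v ^ (2:ℝ) * K u v) ^ (1/2:ℝ) := by
      set φ : ℝ → ℝ≥0∞ := fun v => (K u v * w v) ^ (1/2:ℝ) with hφ
      set ψ : ℝ → ℝ≥0∞ := fun v => ((w v)⁻¹ * F v ^ (2:ℝ) * K u v) ^ (1/2:ℝ) with hψ
      have hφm : AEMeasurable φ (volume.restrict (Ioi 0)) :=
        (((hKum u).mul hwm).pow_const _).aemeasurable
      have hψm : AEMeasurable ψ (volume.restrict (Ioi 0)) :=
        (((hwm.inv.mul (hFm.pow_const _)).mul (hKum u)).pow_const _).aemeasurable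
      have hconj : Real.HolderConjugate 2 2 := Real.HolderConjugate.two_two
      have key := ENNReal.lintegral_mul_le_Lp_mul_Lq (volume.restrict (Ioi 0)) hconj hφm hψm
      have e1 : ∫⁻ v in Ioi (0:ℝ), K u v * F v = ∫⁻ v in Ioi (0:ℝ), (φ * ψ) v := by
        apply setLIntegral_congr_fun measurableSet_Ioi
        intro v hv
        have hv' : (0:ℝ) < v := hv
        have hy0 := hw0 v hv'
        have hyt := hwt v
        beta_reduce
        rw [Pi.mul_apply, hφ, hψ, ← ENNReal.mul_rpow_of_nonneg _ _ (by norm_num : (0:ℝ) ≤ 1/2)]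
        have inner : (K u v * w v) * ((w v)⁻¹ * F v ^ (2:ℝ) * K u v)
            = (K u v * F v) ^ (2:ℝ) := by
          rw [hrpow2, hrpow2]
          calc K u v * w v * ((w v)⁻¹ * (F v * F v) * K u v)
              = (w v * (w v)⁻¹) * (K u v * K u v * (F v * F v)) := by ring
            _ = K u v * F v * (K u v * F v) := by
                rw [ENNReal.mul_inv_cancel hy0 hyt, one_mul]; ring
        rw [inner, ← ENNReal.rpow_mul]
        norm_num
      have e2 : ∫⁻ v in Ioi (0:ℝ), φ v ^ (2:ℝ) = ∫⁻ v in Ioi (0:ℝ), K u v * w v :=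
        lintegral_congr fun v => hhalf2 _
      have e3 : ∫⁻ v in Ioi (0:ℝ), ψ v ^ (2:ℝ)
          = ∫⁻ v in Ioi (0:ℝ), (w v)⁻¹ * F v ^ (2:ℝ) * K u v :=
        lintegral_congr fun v => hhalf2 _
      rw [e1]
      refine le_trans key ?_
      rw [e2, e3]
    calc ((‖∫ v in Ioi (0:ℝ), Q u v * f v‖₊ : ℝ≥0∞)) ^ (2:ℝ)
        ≤ ((∫⁻ v in Ioi (0:ℝ), K u v * w v) ^ (1/2:ℝ)
            * (∫⁻ v in Ioi (0:ℝ), (w v)⁻¹ * F v ^ (2:ℝ) * K u v) ^ (1/2:ℝ)) ^ (2:ℝ) :=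
          ENNReal.rpow_le_rpow (h1.trans hold) (by norm_num)
      _ = (∫⁻ v in Ioi (0:ℝ), K u v * w v)
            * (∫⁻ v in Ioi (0:ℝ), (w v)⁻¹ * F v ^ (2:ℝ) * K u v) := by
          rw [ENNReal.mul_rpow_of_nonneg _ _ (by norm_num : (0:ℝ) ≤ 2), hhalf2, hhalf2]
      _ = ENNReal.ofReal C₁ * (ENNReal.ofReal (u ^ (-(1/2):ℝ))
            * ∫⁻ v in Ioi (0:ℝ), (w v)⁻¹ * F v ^ (2:ℝ) * K u v) := by
          rw [hrow u hu, mul_assoc]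
  -- Step B : integrate the bound
  have hswapm : Measurable (Function.uncurry fun u v : ℝ =>
      ENNReal.ofReal (u ^ (-(1/2):ℝ)) * ((w v)⁻¹ * F v ^ (2:ℝ) * K u v)) := by
    simp only [Function.uncurry, hw, hF, hK, hQ]
    fun_prop
  have stepB : ∫⁻ u in Ioi (0:ℝ), ((‖∫ v in Ioi (0:ℝ), Q u v * f v‖₊ : ℝ≥0∞)) ^ (2:ℝ)
      ≤ ENNReal.ofReal C₁ * (ENNReal.ofReal C₂ * ∫⁻ v in Ioi (0:ℝ), F v ^ (2:ℝ)) := by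
    have hmono : ∫⁻ u in Ioi (0:ℝ), ((‖∫ v in Ioi (0:ℝ), Q u v * f v‖₊ : ℝ≥0∞)) ^ (2:ℝ)
        ≤ ∫⁻ u in Ioi (0:ℝ), ENNReal.ofReal C₁ * (ENNReal.ofReal (u ^ (-(1/2):ℝ))
            * ∫⁻ v in Ioi (0:ℝ), (w v)⁻¹ * F v ^ (2:ℝ) * K u v) :=
      lintegral_mono_ae ((ae_restrict_mem measurableSet_Ioi).mono fun u hu => stepA u hu)
    refine hmono.trans (le_of_eq ?_)
    rw [lintegral_const_mul' _ _ ENNReal.ofReal_ne_top]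
    congr 1
    have hin : ∀ u : ℝ, ENNReal.ofReal (u ^ (-(1/2):ℝ))
        * ∫⁻ v in Ioi (0:ℝ), (w v)⁻¹ * F v ^ (2:ℝ) * K u v
        = ∫⁻ v in Ioi (0:ℝ), ENNReal.ofReal (u ^ (-(1/2):ℝ))
            * ((w v)⁻¹ * F v ^ (2:ℝ) * K u v) := fun u =>
      (lintegral_const_mul' _ _ ENNReal.ofReal_ne_top).symm
    rw [lintegral_congr hin,
      lintegral_lintegral_swap hswapm.aemeasurable]
    have hcolv : ∀ v : ℝ, 0 < v →
        ∫⁻ u in Ioi (0:ℝ), ENNReal.ofReal (u ^ (-(1/2):ℝ))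
            * ((w v)⁻¹ * F v ^ (2:ℝ) * K u v)
          = ENNReal.ofReal C₂ * F v ^ (2:ℝ) := by
      intro v hv
      have hy0 := hw0 v hv
      have hyt := hwt v
      have hcne : (w v)⁻¹ * F v ^ (2:ℝ) ≠ ⊤ :=
        ENNReal.mul_ne_top (ENNReal.inv_ne_top.2 hy0) (hFt v)
      calc ∫⁻ u in Ioi (0:ℝ), ENNReal.ofReal (u ^ (-(1/2):ℝ))
              * ((w v)⁻¹ * F v ^ (2:ℝ) * K u v)
          = ∫⁻ u in Ioi (0:ℝ), ((w v)⁻¹ * F v ^ (2:ℝ))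
              * (K u v * ENNReal.ofReal (u ^ (-(1/2):ℝ))) := lintegral_congr fun u => by ring
        _ = ((w v)⁻¹ * F v ^ (2:ℝ))
              * ∫⁻ u in Ioi (0:ℝ), K u v * ENNReal.ofReal (u ^ (-(1/2):ℝ)) :=
            lintegral_const_mul' _ _ hcne
        _ = ((w v)⁻¹ * F v ^ (2:ℝ)) * (ENNReal.ofReal C₂ * w v) := by
            rw [hcol v hv]
        _ = ENNReal.ofReal C₂ * F v ^ (2:ℝ) * ((w v)⁻¹ * w v) := by ring
        _ = ENNReal.ofReal C₂ * F v ^ (2:ℝ) := by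
            rw [ENNReal.inv_mul_cancel hy0 hyt, mul_one]
    rw [lintegral_congr_ae ((ae_restrict_mem measurableSet_Ioi).mono fun v hv => hcolv v hv)]
    exact lintegral_const_mul' _ _ ENNReal.ofReal_ne_top
  -- Step C : conclude
  have hL2g : eLpNorm (fun u : ℝ => ∫ v in Ioi (0:ℝ), Q u v * f v) 2 (volume.restrict (Ioi 0))
      = (∫⁻ u in Ioi (0:ℝ), ((‖∫ v in Ioi (0:ℝ), Q u v * f v‖₊ : ℝ≥0∞)) ^ (2:ℝ)) ^ (1/2:ℝ) := by
    rw [eLpNorm_eq_lintegral_rpow_enorm_toReal two_ne_zero ENNReal.ofNat_ne_top]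
    norm_num
    rfl
  have hL2f : eLpNorm f 2 (volume.restrict (Ioi 0))
      = (∫⁻ v in Ioi (0:ℝ), F v ^ (2:ℝ)) ^ (1/2:ℝ) := by
    rw [eLpNorm_eq_lintegral_rpow_enorm_toReal two_ne_zero ENNReal.ofNat_ne_top]
    norm_num
    rfl
  have hsqrt : Real.sqrt (C₁ * C₂) = 1 / Real.sqrt (γ*δ) * (π / Real.cos (β*π)) := by
    have hgd : (0:ℝ) < γ*δ := mul_pos hγ hδ
    have hX : (0:ℝ) ≤ π / Real.cos (β*π) := (div_pos pi_pos hcos).le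
    have h2 : Real.sqrt (γ*δ)^2 = γ*δ := Real.sq_sqrt hgd.le
    have hpos : (0:ℝ) ≤ 1 / Real.sqrt (γ*δ) * (π / Real.cos (β*π)) :=
      mul_nonneg (by positivity) hX
    rw [show C₁ * C₂ = (1 / Real.sqrt (γ*δ) * (π / Real.cos (β*π)))^2 from ?_,
      Real.sqrt_sq hpos]
    rw [mul_pow, one_div, inv_pow, h2, hC₁, hC₂]
    field_simp
  calc eLpNorm (fun u : ℝ => ∫ v in Ioi (0:ℝ), Q u v * f v) 2 (volume.restrict (Ioi 0))
      = (∫⁻ u in Ioi (0:ℝ), ((‖∫ v in Ioi (0:ℝ), Q u v * f v‖₊ : ℝ≥0∞)) ^ (2:ℝ)) ^ (1/2:ℝ) :=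
        hL2g
    _ ≤ (ENNReal.ofReal C₁ * (ENNReal.ofReal C₂ * ∫⁻ v in Ioi (0:ℝ), F v ^ (2:ℝ))) ^ (1/2:ℝ) :=
        ENNReal.rpow_le_rpow stepB (by norm_num)
    _ = ENNReal.ofReal (Real.sqrt (C₁ * C₂)) * (∫⁻ v in Ioi (0:ℝ), F v ^ (2:ℝ)) ^ (1/2:ℝ) := by
        rw [← mul_assoc, ← ENNReal.ofReal_mul hC₁pos.le,
          ENNReal.mul_rpow_of_nonneg _ _ (by norm_num : (0:ℝ) ≤ 1/2),
          ENNReal.ofReal_rpow_of_nonneg (by positivity) (by norm_num),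
          ← Real.sqrt_eq_rpow]
    _ = ENNReal.ofReal ((1 / Real.sqrt (γ * δ)) * (π / Real.cos (β * π))) *
          eLpNorm f 2 (volume.restrict (Ioi 0)) := by
        rw [hsqrt, hL2f]

/-- The integral operator on `L²((0,∞))` with kernel
`Q(u,v) = u^{(1/2-β)γ-1/2} v^{(1/2+β)δ-1/2}/(u^γ+v^δ)` is bounded with norm at most
`(γδ)^{-1/2} π / cos(βπ)`. -/
theorem schur_bound_Q (β γ δ : ℝ) (hβ : β ∈ Set.Ioo (-(1/2) : ℝ) (1/2))
    (hγ : 0 < γ) (hδ : 0 < δ)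
    (f : ℝ → ℝ) (hf : MemLp f 2 (volume.restrict (Set.Ioi 0))) :
    eLpNorm (fun u : ℝ => ∫ v in Set.Ioi (0:ℝ),
        (u ^ ((1/2 - β) * γ - 1/2) * v ^ ((1/2 + β) * δ - 1/2) / (u ^ γ + v ^ δ)) * f v) 2
        (volume.restrict (Set.Ioi 0))
      ≤ ENNReal.ofReal ((1 / Real.sqrt (γ * δ)) * (π / Real.cos (β * π))) *
          eLpNorm f 2 (volume.restrict (Set.Ioi 0)) := by
  have hsm := hf.1
  set f' := hsm.mk f with hf'
  have hmeas : Measurable f' := hsm.stronglyMeasurable_mk.measurable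
  have hae : f =ᵐ[volume.restrict (Set.Ioi 0)] f' := hsm.ae_eq_mk
  have hfun : (fun u : ℝ => ∫ v in Set.Ioi (0:ℝ),
        (u ^ ((1/2 - β) * γ - 1/2) * v ^ ((1/2 + β) * δ - 1/2) / (u ^ γ + v ^ δ)) * f v)
      = fun u : ℝ => ∫ v in Set.Ioi (0:ℝ),
        (u ^ ((1/2 - β) * γ - 1/2) * v ^ ((1/2 + β) * δ - 1/2) / (u ^ γ + v ^ δ)) * f' v := by
    funext u
    exact integral_congr_ae (hae.mono fun v hv => by simp only []; rw [hv])
  rw [hfun, eLpNorm_congr_ae hae]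
  exact schur_core β γ δ hβ hγ hδ f' hmeas
end Scaled
end

section
/- For λ > 0, s ∈ (0,2), and f ∈ L²(ℝ³) with (|p|²+λ)^{s/2} f̂ ∈ L²(ℝ³), define c(t) = (2π)^{-3/2} ∫_{ℝ³} (|p|²+λ)^{s/2} f̂(p) / (|p|²+λ+t) dp for t ≥ 0. Then c is continuous on [0,∞) and there is a constant C (independent of f and t) with |c(t)| ≤ C ‖(|p|²+λ)^{s/2} f̂‖_{L²} (1+t)^{-1/4} for all t ≥ 0. -/
open Real MeasureTheory Set
open scoped FourierTransform

local notation "E3" => EuclideanSpace ℝ (Fin 3)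

lemma aux_base_int : Integrable (fun q : E3 => (((1:ℝ) + ‖q‖^2)^2)⁻¹) volume := by
  have h := integrable_rpow_neg_one_add_norm_sq (E := E3) (μ := volume) (r := 4)
    (by simp [finrank_euclideanSpace_fin]; norm_num)
  refine h.congr (Filter.Eventually.of_forall fun q => ?_)
  have h1 : (0:ℝ) < 1 + ‖q‖^2 := by positivity
  simp only
  rw [show (-(4:ℝ)/2) = -(2:ℝ) by norm_num, Real.rpow_neg h1.le,
    show ((2:ℝ) = ((2:ℕ):ℝ)) by norm_num, Real.rpow_natCast]

lemma aux_comp {a : ℝ} (ha : 0 < a) (p : E3) :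
    ((‖p‖^2 + a)^2)⁻¹ ≤ ((min a 1)^2)⁻¹ * (((1:ℝ) + ‖p‖^2)^2)⁻¹ := by
  have h1 : (0:ℝ) < 1 + ‖p‖^2 := by positivity
  have hm : 0 < min a 1 := lt_min ha one_pos
  have key : min a 1 * (1 + ‖p‖^2) ≤ ‖p‖^2 + a := by
    have h2 : min a 1 ≤ a := min_le_left _ _
    have h3 : min a 1 ≤ 1 := min_le_right _ _
    nlinarith [sq_nonneg ‖p‖]
  rw [← mul_inv, ← mul_pow]
  have hpos : (0:ℝ) < (min a 1 * (1 + ‖p‖^2))^2 := by positivity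
  exact inv_anti₀ hpos (pow_le_pow_left₀ (by positivity) key 2)

lemma aux_int {a : ℝ} (ha : 0 < a) : Integrable (fun p : E3 => ((‖p‖^2 + a)^2)⁻¹) volume := by
  refine ((aux_base_int.const_mul (((min a 1)^2)⁻¹)).mono' ?_ ?_)
  · apply Continuous.aestronglyMeasurable
    fun_prop (disch := intros; positivity)
  · refine Filter.Eventually.of_forall fun p => ?_
    rw [Real.norm_of_nonneg (by positivity)]
    exact aux_comp ha p

lemma aux_scale {a : ℝ} (ha : 0 < a) :
    ∫ p : E3, ((‖p‖^2 + a)^2)⁻¹ = a ^ (-(1/2) : ℝ) * ∫ q : E3, (((1:ℝ) + ‖q‖^2)^2)⁻¹ := by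
  have hfin : Module.finrank ℝ E3 = 3 := finrank_euclideanSpace_fin
  have key := MeasureTheory.Measure.integral_comp_smul_of_nonneg (volume : Measure E3)
    (fun p : E3 => ((‖p‖^2 + a)^2)⁻¹) (Real.sqrt a) (hR := Real.sqrt_nonneg a)
  have hsq : ∀ x : E3, ‖Real.sqrt a • x‖^2 = a * ‖x‖^2 := by
    intro x
    rw [norm_smul, mul_pow, Real.norm_eq_abs, sq_abs, Real.sq_sqrt ha.le]
  have hL : (∫ x : E3, ((‖Real.sqrt a • x‖^2 + a)^2)⁻¹)
      = (a^2)⁻¹ * ∫ q : E3, (((1:ℝ) + ‖q‖^2)^2)⁻¹ := by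
    rw [← integral_const_mul]
    congr 1
    ext x
    rw [hsq x, show a * ‖x‖^2 + a = a * (1 + ‖x‖^2) by ring, mul_pow, mul_inv]
  rw [hL, hfin, smul_eq_mul] at key
  have hs3 : ((Real.sqrt a) ^ 3 : ℝ) = a ^ ((3:ℝ)/2) := by
    rw [Real.sqrt_eq_rpow, ← Real.rpow_natCast (a ^ ((1:ℝ)/2)) 3,
      ← Real.rpow_mul ha.le]
    norm_num
  rw [hs3] at key
  have hne : a ^ ((3:ℝ)/2) ≠ 0 := (Real.rpow_pos_of_pos ha _).ne'
  have : ∫ p : E3, ((‖p‖^2 + a)^2)⁻¹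
      = a ^ ((3:ℝ)/2) * ((a^2)⁻¹ * ∫ q : E3, (((1:ℝ) + ‖q‖^2)^2)⁻¹) := by
    rw [key, ← mul_assoc, mul_inv_cancel₀ hne, one_mul]
  rw [this, ← mul_assoc]
  congr 1
  rw [show (a:ℝ)^2 = a ^ (2:ℝ) by rw [← Real.rpow_natCast a 2]; norm_num,
    ← Real.rpow_neg ha.le, ← Real.rpow_add ha]
  norm_num

lemma aux_memL2R {a : ℝ} (ha : 0 < a) :
    MemLp (fun p : E3 => (‖p‖^2 + a)⁻¹) 2 volume := by
  have hc : Continuous (fun p : E3 => (‖p‖^2 + a)⁻¹) := by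
    fun_prop (disch := intros; positivity)
  rw [memLp_two_iff_integrable_sq hc.aestronglyMeasurable]
  refine (aux_int ha).congr (Filter.Eventually.of_forall fun p => ?_)
  simp [inv_pow]

lemma aux_memL2C {a : ℝ} (ha : 0 < a) :
    MemLp (fun p : E3 => ((((‖p‖^2 + a : ℝ)) : ℂ))⁻¹) 2 volume := by
  have h := Complex.ofRealCLM.comp_memLp' (aux_memL2R ha)
  simpa [Function.comp_def, Complex.ofReal_inv] using h

lemma aux_normsq {a : ℝ} (ha : 0 < a) :
    ∫ p : E3, ‖((((‖p‖^2 + a : ℝ)) : ℂ))⁻¹‖ ^ (2:ℝ)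
      = a ^ (-(1/2) : ℝ) * ∫ q : E3, (((1:ℝ) + ‖q‖^2)^2)⁻¹ := by
  rw [← aux_scale ha]
  congr 1
  ext p
  have hp : (0:ℝ) < ‖p‖^2 + a := by positivity
  rw [norm_inv, Complex.norm_real, Real.norm_of_nonneg hp.le,
    show ((2:ℝ) = ((2:ℕ):ℝ)) by norm_num, Real.rpow_natCast, inv_pow]

/-- For `f ∈ L²(ℝ³)` with `(|p|²+λ)^{s/2} f̂ ∈ L²(ℝ³)`, the function
`c(t) = (2π)^{-3/2} ∫ (|p|²+λ)^{s/2} f̂(p)/(|p|²+λ+t) dp` is continuous on `[0,∞)` and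
satisfies `|c(t)| ≤ C ‖(|p|²+λ)^{s/2} f̂‖₂ (1+t)^{-1/4}` with `C` independent of `f, t`. -/
theorem c_continuous_and_bound (lam s : ℝ) (hlam : 0 < lam) (hs : s ∈ Set.Ioo (0:ℝ) 2) :
    ∃ C > 0, ∀ f : EuclideanSpace ℝ (Fin 3) → ℂ,
      MemLp f 2 volume →
      MemLp (fun p => (((‖p‖ ^ 2 + lam) ^ (s / 2) : ℝ) : ℂ) * 𝓕 f p) 2 volume →
      ContinuousOn (fun t : ℝ =>
          (((2 * π : ℝ) ^ ((3:ℝ) / 2))⁻¹ : ℝ) •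
            ∫ p : EuclideanSpace ℝ (Fin 3),
              (((‖p‖ ^ 2 + lam) ^ (s / 2) : ℝ) : ℂ) * 𝓕 f p
                / ((‖p‖ ^ 2 + lam + t : ℝ) : ℂ)) (Set.Ici 0) ∧
      ∀ t : ℝ, 0 ≤ t →
        ‖(((2 * π : ℝ) ^ ((3:ℝ) / 2))⁻¹ : ℝ) •
            ∫ p : EuclideanSpace ℝ (Fin 3),
              (((‖p‖ ^ 2 + lam) ^ (s / 2) : ℝ) : ℂ) * 𝓕 f p
                / ((‖p‖ ^ 2 + lam + t : ℝ) : ℂ)‖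
          ≤ C * (eLpNorm (fun p => (((‖p‖ ^ 2 + lam) ^ (s / 2) : ℝ) : ℂ) * 𝓕 f p) 2
                  volume).toReal * (1 + t) ^ (-(1/4) : ℝ) := by
  set I : ℝ := ∫ q : E3, (((1:ℝ) + ‖q‖^2)^2)⁻¹ with hI_def
  have hI_pos : 0 < I := by
    rw [hI_def, MeasureTheory.integral_pos_iff_support_of_nonneg
      (fun q => by positivity) aux_base_int]
    have : (Function.support fun q : E3 => (((1:ℝ) + ‖q‖^2)^2)⁻¹) = Set.univ := by
      ext q; simp only [Function.mem_support, Set.mem_univ, iff_true]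
      positivity
    rw [this]
    exact isOpen_univ.measure_pos volume ⟨0, trivial⟩
  set r : ℝ := (((2 * π : ℝ) ^ ((3:ℝ) / 2))⁻¹ : ℝ) with hr_def
  have hr_pos : 0 < r := by
    rw [hr_def]
    exact inv_pos.mpr (Real.rpow_pos_of_pos (by positivity) _)
  set m : ℝ := min lam 1 with hm_def
  have hm_pos : 0 < m := lt_min hlam one_pos
  refine ⟨r * (I ^ ((1:ℝ)/2) * m ^ (-(1/4) : ℝ)), by positivity, ?_⟩
  intro f hf hg
  set g : E3 → ℂ := fun p => (((‖p‖ ^ 2 + lam) ^ (s / 2) : ℝ) : ℂ) * 𝓕 f p with hg_def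
  constructor
  · -- continuity
    have hcont : ContinuousOn (fun t : ℝ =>
        ∫ p : E3, g p / ((‖p‖ ^ 2 + lam + t : ℝ) : ℂ)) (Set.Ici 0) := by
      apply MeasureTheory.continuousOn_of_dominated
        (bound := fun p : E3 => (‖p‖^2 + lam)⁻¹ * ‖g p‖)
      · intro t ht
        simp only [div_eq_mul_inv]
        apply hg.1.mul
        apply Continuous.aestronglyMeasurable
        apply Continuous.inv₀ (Complex.continuous_ofReal.comp (by fun_prop))
        intro p
        have h2 : (0:ℝ) < ‖p‖^2 + lam + t := by have := mem_Ici.mp ht; positivity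
        exact Complex.ofReal_ne_zero.mpr h2.ne'
      · intro t ht
        refine Filter.Eventually.of_forall fun p => ?_
        have h1 : (0:ℝ) < ‖p‖^2 + lam := by positivity
        have h2 : (0:ℝ) < ‖p‖^2 + lam + t := by have := mem_Ici.mp ht; linarith
        rw [norm_div, Complex.norm_real, Real.norm_of_nonneg h2.le]
        rw [div_eq_mul_inv, mul_comm]
        apply mul_le_mul_of_nonneg_right _ (norm_nonneg _)
        exact inv_anti₀ h1 (by linarith [mem_Ici.mp ht])
      · have key := MemLp.smul (p := 2) (q := 2) (r := 1) hg.norm (aux_memL2R hlam)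
          (hpqr := ⟨by simpa using ENNReal.inv_two_add_inv_two⟩)
        rw [memLp_one_iff_integrable] at key
        exact key
      · refine Filter.Eventually.of_forall fun p => ?_
        apply ContinuousOn.div continuousOn_const
        · exact (Complex.continuous_ofReal.comp (by fun_prop)).continuousOn
        · intro t ht
          have : (0:ℝ) < ‖p‖^2 + lam + t := by have := mem_Ici.mp ht; positivity
          exact Complex.ofReal_ne_zero.mpr this.ne'
    exact hcont.const_smul r
  · -- bound
    intro t ht
    have ha : 0 < lam + t := by linarith
    have ha' : ∀ p : E3, (0:ℝ) < ‖p‖^2 + lam + t := fun p => by positivity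
    set N : ℝ := (eLpNorm g 2 volume).toReal with hN_def
    have hN_nonneg : 0 ≤ N := ENNReal.toReal_nonneg
    have conj : Real.HolderConjugate 2 2 := Real.HolderConjugate.two_two
    have hg2 : MemLp g (ENNReal.ofReal 2) volume := by
      simpa [ENNReal.ofReal_ofNat] using hg
    have hC2 : MemLp (fun p : E3 => ((((‖p‖^2 + (lam + t) : ℝ)) : ℂ))⁻¹) (ENNReal.ofReal 2)
        volume := by simpa [ENNReal.ofReal_ofNat] using aux_memL2C ha
    have step1 : ‖∫ p : E3, g p / ((‖p‖ ^ 2 + lam + t : ℝ) : ℂ)‖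
        ≤ ∫ p : E3, ‖g p‖ * ‖((((‖p‖^2 + (lam + t) : ℝ)) : ℂ))⁻¹‖ := by
      refine (norm_integral_le_integral_norm _).trans (le_of_eq ?_)
      congr 1
      ext p
      rw [div_eq_mul_inv, norm_mul]
      norm_num [add_assoc]
    have step2 : ∫ p : E3, ‖g p‖ * ‖((((‖p‖^2 + (lam + t) : ℝ)) : ℂ))⁻¹‖
        ≤ (∫ p : E3, ‖g p‖ ^ (2:ℝ)) ^ ((1:ℝ)/2)
          * (∫ p : E3, ‖((((‖p‖^2 + (lam + t) : ℝ)) : ℂ))⁻¹‖ ^ (2:ℝ)) ^ ((1:ℝ)/2) :=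
      MeasureTheory.integral_mul_norm_le_Lp_mul_Lq conj hg2 hC2
    have hNval : (∫ p : E3, ‖g p‖ ^ (2:ℝ)) ^ ((1:ℝ)/2) = N := by
      rw [hN_def, hg.eLpNorm_eq_integral_rpow_norm two_ne_zero ENNReal.ofNat_ne_top]
      rw [ENNReal.toReal_ofReal (by positivity)]
      norm_num
    have hHval : (∫ p : E3, ‖((((‖p‖^2 + (lam + t) : ℝ)) : ℂ))⁻¹‖ ^ (2:ℝ)) ^ ((1:ℝ)/2)
        = (lam + t) ^ (-(1/4) : ℝ) * I ^ ((1:ℝ)/2) := by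
      rw [aux_normsq ha, Real.mul_rpow (Real.rpow_nonneg ha.le _) hI_pos.le,
        ← Real.rpow_mul ha.le]
      norm_num
    have hmono : (lam + t) ^ (-(1/4) : ℝ) ≤ m ^ (-(1/4) : ℝ) * (1 + t) ^ (-(1/4) : ℝ) := by
      have hle : m * (1 + t) ≤ lam + t := by
        have h2 : m ≤ lam := min_le_left _ _
        have h3 : m ≤ 1 := min_le_right _ _
        nlinarith
      have := Real.rpow_le_rpow_of_nonpos (by positivity) hle (by norm_num :
        (-(1/4) : ℝ) ≤ 0)
      rwa [Real.mul_rpow hm_pos.le (by linarith)] at this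
    have chain : ‖∫ p : E3, g p / ((‖p‖ ^ 2 + lam + t : ℝ) : ℂ)‖
        ≤ N * (m ^ (-(1/4) : ℝ) * (1 + t) ^ (-(1/4) : ℝ) * I ^ ((1:ℝ)/2)) := by
      refine (step1.trans step2).trans ?_
      rw [hNval, hHval]
      apply mul_le_mul_of_nonneg_left _ hN_nonneg
      apply mul_le_mul_of_nonneg_right hmono (Real.rpow_nonneg hI_pos.le _)
    rw [norm_smul, Real.norm_of_nonneg hr_pos.le]
    calc r * ‖∫ p : E3, g p / ((‖p‖ ^ 2 + lam + t : ℝ) : ℂ)‖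
        ≤ r * (N * (m ^ (-(1/4) : ℝ) * (1 + t) ^ (-(1/4) : ℝ) * I ^ ((1:ℝ)/2))) :=
          mul_le_mul_of_nonneg_left chain hr_pos.le
      _ = r * (I ^ ((1:ℝ)/2) * m ^ (-(1/4) : ℝ)) * N * (1 + t) ^ (-(1/4) : ℝ) := by ring
end

section
/- For s ≥ 0, 1 − L(s) = (2/π) arctan(√s) + (1/π) ln((1+√s)²/(1+s)), this function is strictly increasing on [0,∞), tends to 1 as s → ∞, and satisfies 1 − L(s) ≤ (4/π)√s for 0 ≤ s ≤ 2. -/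
open Real MeasureTheory Set Filter

noncomputable def gAux : ℝ → ℝ := fun s =>
  Real.arctan (Real.sqrt s) + (Real.log (1 + Real.sqrt s) - (1/2) * Real.log (1 + s))

lemma sqrt_tendsto_atTop : Tendsto Real.sqrt atTop atTop := by
  apply tendsto_atTop_atTop.2
  intro b
  refine ⟨(max b 0)^2, fun a ha => ?_⟩
  calc b ≤ max b 0 := le_max_left _ _
    _ = Real.sqrt ((max b 0)^2) := (Real.sqrt_sq (le_max_right _ _)).symm
    _ ≤ Real.sqrt a := Real.sqrt_le_sqrt ha

lemma gAux_hasDerivAt {x : ℝ} (hx : 0 < x) :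
    HasDerivAt gAux (1 / ((1 + x) * (1 + Real.sqrt x) * Real.sqrt x)) x := by
  have hsx : 0 < Real.sqrt x := Real.sqrt_pos.2 hx
  have h1 : HasDerivAt Real.sqrt (1 / (2 * Real.sqrt x)) x := Real.hasDerivAt_sqrt hx.ne'
  have h2 : HasDerivAt (fun s => Real.arctan (Real.sqrt s))
      ((1 / (1 + Real.sqrt x ^ 2)) * (1 / (2 * Real.sqrt x))) x :=
    (Real.hasDerivAt_arctan _).comp x h1
  have h3 : HasDerivAt (fun s => 1 + Real.sqrt s) (1 / (2 * Real.sqrt x)) x := h1.const_add 1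
  have h4 : HasDerivAt (fun s => Real.log (1 + Real.sqrt s))
      ((1 + Real.sqrt x)⁻¹ * (1 / (2 * Real.sqrt x))) x :=
    (Real.hasDerivAt_log (by positivity)).comp x h3
  have h5 : HasDerivAt (fun s : ℝ => 1 + s) 1 x := (hasDerivAt_id x).const_add 1
  have h6 : HasDerivAt (fun s => Real.log (1 + s)) ((1 + x)⁻¹ * 1) x :=
    (Real.hasDerivAt_log (by positivity)).comp x h5
  have := h2.add (h4.sub (h6.const_mul (1/2)))
  refine this.congr_deriv ?_
  set t := Real.sqrt x with ht
  have hx' : x = t^2 := (Real.sq_sqrt hx.le).symm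
  have ht0 : 0 < t := hsx
  rw [hx']
  have h1 : (1:ℝ) + t^2 ≠ 0 := by positivity
  have h2' : (1:ℝ) + t ≠ 0 := by positivity
  field_simp
  ring

lemma gAux_cont : ContinuousOn gAux (Set.Ici 0) := by
  apply ContinuousOn.add
  · exact (Real.continuous_arctan.comp Real.continuous_sqrt).continuousOn
  · apply ContinuousOn.sub
    · exact ContinuousOn.log (continuous_const.add Real.continuous_sqrt).continuousOn
        (fun x hx => by have := Real.sqrt_nonneg x; positivity)
    · exact ContinuousOn.mul continuousOn_const (ContinuousOn.log
        (continuous_const.add continuous_id).continuousOn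
        (fun x hx => by have : (0:ℝ) ≤ x := hx; positivity))

lemma gAux_tendsto : Tendsto gAux atTop (nhds (π/2)) := by
  have hA : Tendsto (fun s => Real.arctan (Real.sqrt s)) atTop (nhds (π/2)) :=
    (Real.tendsto_arctan_atTop.mono_right nhdsWithin_le_nhds).comp sqrt_tendsto_atTop
  have h0 : Tendsto (fun s : ℝ => Real.sqrt s / (1 + s)) atTop (nhds 0) := by
    have h1 : Tendsto (fun s : ℝ => (1 + s) / Real.sqrt s) atTop atTop := by
      apply tendsto_atTop_mono' atTop ?_ sqrt_tendsto_atTop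
      filter_upwards [eventually_ge_atTop (1:ℝ)] with s hs
      rw [le_div_iff₀ (Real.sqrt_pos.2 (by linarith))]
      rw [Real.mul_self_sqrt (by linarith)]
      linarith
    apply h1.inv_tendsto_atTop.congr'
    filter_upwards with s
    simp [inv_div]
  have hq : Tendsto (fun s : ℝ => (1 + Real.sqrt s)^2 / (1 + s)) atTop (nhds 1) := by
    have h2 : Tendsto (fun s : ℝ => 1 + 2 * (Real.sqrt s / (1 + s))) atTop
        (nhds (1 + 2 * 0)) := tendsto_const_nhds.add (h0.const_mul 2)
    norm_num at h2
    apply h2.congr'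
    filter_upwards [eventually_gt_atTop (0:ℝ)] with s hs
    have hsq : Real.sqrt s ^ 2 = s := Real.sq_sqrt hs.le
    have hne : (1:ℝ) + s ≠ 0 := by positivity
    field_simp
    nlinarith [hsq]
  have hB : Tendsto (fun s : ℝ => Real.log (1 + Real.sqrt s) - (1/2) * Real.log (1 + s))
      atTop (nhds 0) := by
    have h3 : Tendsto (fun s : ℝ => (1/2) * Real.log ((1 + Real.sqrt s)^2 / (1 + s)))
        atTop (nhds ((1/2) * Real.log 1)) := (hq.log one_ne_zero).const_mul _
    rw [Real.log_one, mul_zero] at h3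
    apply h3.congr'
    filter_upwards [eventually_gt_atTop (0:ℝ)] with s hs
    have h1s : (1:ℝ) + s ≠ 0 := by positivity
    have h1sx : (1:ℝ) + Real.sqrt s ≠ 0 := by have := Real.sqrt_nonneg s; positivity
    rw [Real.log_div (pow_ne_zero _ h1sx) h1s, Real.log_pow]
    push_cast
    ring
  have := hA.add hB
  norm_num at this
  exact this

lemma integral_eq {s : ℝ} (hs : 0 ≤ s) :
    ∫ r in Set.Ioi s, 1 / ((1 + r) * (1 + Real.sqrt r) * Real.sqrt r) = π/2 - gAux s := by
  apply integral_Ioi_of_hasDerivAt_of_nonneg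
  · exact (gAux_cont.continuousWithinAt hs).mono (Set.Ici_subset_Ici.2 hs)
  · exact fun x hx => gAux_hasDerivAt (lt_of_le_of_lt hs hx)
  · intro x hx
    have hx0 : (0:ℝ) < x := lt_of_le_of_lt hs hx
    have := Real.sqrt_pos.2 hx0
    positivity
  · exact gAux_tendsto

lemma arctan_le_self' {x : ℝ} (hx : 0 ≤ x) : Real.arctan x ≤ x := by
  rcases eq_or_lt_of_le hx with h | h
  · simp [← h]
  · have hy : 0 < Real.arctan x := by
      have := Real.arctan_strictMono h
      rwa [Real.arctan_zero] at this
    have := Real.lt_tan hy (Real.arctan_lt_pi_div_two x)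
    rw [Real.tan_arctan] at this
    exact this.le

theorem one_sub_L_properties :
    let L : ℝ → ℝ := fun s =>
      (2 / π) * ∫ r in Set.Ioi s, 1 / ((1 + r) * (1 + Real.sqrt r) * Real.sqrt r)
    (∀ s : ℝ, 0 ≤ s →
        1 - L s = (2 / π) * Real.arctan (Real.sqrt s)
            + (1 / π) * Real.log ((1 + Real.sqrt s) ^ 2 / (1 + s))) ∧
    StrictMonoOn (fun s => 1 - L s) (Set.Ici 0) ∧
    Tendsto (fun s => 1 - L s) atTop (nhds 1) ∧
    ∀ s : ℝ, s ∈ Set.Icc (0:ℝ) 2 → 1 - L s ≤ (4 / π) * Real.sqrt s := by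
  intro L
  have hπ : π ≠ 0 := Real.pi_ne_zero
  have key : ∀ s : ℝ, 0 ≤ s → 1 - L s = (2/π) * gAux s := by
    intro s hs
    show 1 - (2/π) * _ = _
    rw [integral_eq hs]
    field_simp
    ring
  have part1 : ∀ s : ℝ, 0 ≤ s →
      1 - L s = (2 / π) * Real.arctan (Real.sqrt s)
          + (1 / π) * Real.log ((1 + Real.sqrt s) ^ 2 / (1 + s)) := by
    intro s hs
    rw [key s hs]
    have h1s : (1:ℝ) + s ≠ 0 := by positivity
    have h1sx : (1:ℝ) + Real.sqrt s ≠ 0 := by have := Real.sqrt_nonneg s; positivity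
    rw [Real.log_div (pow_ne_zero _ h1sx) h1s, Real.log_pow]
    unfold gAux
    push_cast
    field_simp
  refine ⟨part1, ?_, ?_, ?_⟩
  · -- StrictMonoOn
    have gm : StrictMonoOn gAux (Set.Ici 0) := by
      apply strictMonoOn_of_deriv_pos (convex_Ici 0) gAux_cont
      intro x hx
      rw [interior_Ici] at hx
      rw [(gAux_hasDerivAt hx).deriv]
      have := Real.sqrt_pos.2 hx
      have : (0:ℝ) < x := hx
      positivity
    intro a ha b hb hab
    simp only []
    rw [key a ha, key b hb]
    have h2π : (0:ℝ) < 2/π := by positivity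
    exact mul_lt_mul_of_pos_left (gm ha hb hab) h2π
  · -- Tendsto
    have h : Tendsto (fun s => (2/π) * gAux s) atTop (nhds ((2/π) * (π/2))) :=
      gAux_tendsto.const_mul _
    rw [show (2/π) * (π/2) = 1 by field_simp] at h
    apply h.congr'
    filter_upwards [eventually_ge_atTop (0:ℝ)] with s hs
    exact (key s hs).symm
  · -- bound
    intro s hs
    obtain ⟨hs0, -⟩ := hs
    rw [key s hs0]
    have hx := Real.sqrt_nonneg s
    have h1 : Real.arctan (Real.sqrt s) ≤ Real.sqrt s := arctan_le_self' hx
    have h2 : Real.log (1 + Real.sqrt s) ≤ Real.sqrt s := by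
      have := Real.log_le_sub_one_of_pos (show (0:ℝ) < 1 + Real.sqrt s by positivity)
      linarith
    have h3 : 0 ≤ Real.log (1 + s) := Real.log_nonneg (by linarith)
    have hg : gAux s ≤ 2 * Real.sqrt s := by
      unfold gAux
      linarith
    have h2π : (0:ℝ) ≤ 2/π := by positivity
    calc (2/π) * gAux s ≤ (2/π) * (2 * Real.sqrt s) := mul_le_mul_of_nonneg_left hg h2π
      _ = (4/π) * Real.sqrt s := by ring
end

section
/- For α ≥ 0, λ > 0, s ∈ (0, 3/2), define J by its Fourier transform Ĵ(p) = (sin(sπ/2)/(π(2π)^{3/2})) ∫₀^∞ t^{s/2−1} φ(t)/(|p|²+λ+t) dt, where φ(t) = (4πα+√λ)/(4πα+√(λ+t)). Then Ĵ ∈ L²(ℝ³); i.e. ∫_{ℝ³} |Ĵ(p)|² dp < ∞. -/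
open Real MeasureTheory Set

set_option maxHeartbeats 1000000 in
/-- For `s ∈ (0,3/2)`, the function `Ĵ(p) = (sin(sπ/2)/(π(2π)^{3/2})) ∫₀^∞
t^{s/2-1} φ(t)/(|p|²+λ+t) dt`, with `φ(t) = (4πα+√λ)/(4πα+√(λ+t))`, is in `L²(ℝ³)`. -/
theorem Jhat_memL2 (α lam s : ℝ) (hα : 0 ≤ α) (hlam : 0 < lam)
    (hs : s ∈ Set.Ioo (0:ℝ) (3/2)) :
    MemLp (fun p : EuclideanSpace ℝ (Fin 3) =>
        (Real.sin (s * π / 2) / (π * (2 * π) ^ ((3:ℝ) / 2))) *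
          ∫ t in Set.Ioi (0:ℝ),
            t ^ (s / 2 - 1) *
              ((4 * π * α + Real.sqrt lam) / (4 * π * α + Real.sqrt (lam + t)))
              / (‖p‖ ^ 2 + lam + t)) 2 volume := by
  obtain ⟨hs0, hs32⟩ := hs
  have hπ : (0:ℝ) < π := Real.pi_pos
  set K : ℝ := 4 * π * α + Real.sqrt lam with hKdef
  have hK0 : 0 ≤ K := by positivity
  -- the exponent θ
  set θ : ℝ := min 1 (9/8 - s/4) with hθdef
  have hθ1 : θ ≤ 1 := min_le_left _ _
  have hθ34 : 3/4 < θ := lt_min (by norm_num) (by linarith)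
  have hθ0 : 0 ≤ θ := by linarith
  have hθs : s/2 + θ < 3/2 := by
    have := min_le_right (1:ℝ) (9/8 - s/4)
    linarith
  -- the function φ and its bounds
  set φ : ℝ → ℝ := fun t => K / (4 * π * α + Real.sqrt (lam + t)) with hφdef
  have hφden : ∀ t : ℝ, 0 ≤ t → 0 < 4 * π * α + Real.sqrt (lam + t) := by
    intro t ht
    have : 0 < Real.sqrt (lam + t) := Real.sqrt_pos.2 (by linarith)
    positivity
  have hφ0 : ∀ t : ℝ, 0 ≤ t → 0 ≤ φ t := fun t ht =>
    div_nonneg hK0 (hφden t ht).le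
  have hφ1 : ∀ t : ℝ, 0 ≤ t → φ t ≤ 1 := by
    intro t ht
    rw [div_le_one (hφden t ht)]
    have : Real.sqrt lam ≤ Real.sqrt (lam + t) := Real.sqrt_le_sqrt (by linarith)
    simp only [hKdef]; linarith
  have hφ2 : ∀ t : ℝ, 0 < t → φ t ≤ K * t ^ (-(1:ℝ)/2) := by
    intro t ht
    have h1 : Real.sqrt t ≤ 4 * π * α + Real.sqrt (lam + t) := by
      have : Real.sqrt t ≤ Real.sqrt (lam + t) := Real.sqrt_le_sqrt (by linarith)
      have h2 : 0 ≤ 4 * π * α := by positivity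
      linarith
    have hst : 0 < Real.sqrt t := Real.sqrt_pos.2 ht
    calc φ t ≤ K / Real.sqrt t := by
          exact div_le_div_of_nonneg_left hK0 hst h1
      _ = K * t ^ (-(1:ℝ)/2) := by
          rw [show (-1/2:ℝ) = -(1/2) by norm_num, Real.rpow_neg ht.le,
            ← Real.sqrt_eq_rpow, div_eq_mul_inv]
  -- the majorant H
  set H : ℝ → ℝ := fun t => t ^ (s/2 - 1) * φ t * (lam + t) ^ (θ - 1) with hHdef
  have hH0 : ∀ t : ℝ, 0 < t → 0 ≤ H t := by
    intro t ht
    exact mul_nonneg (mul_nonneg (Real.rpow_nonneg ht.le _) (hφ0 t ht.le))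
      (Real.rpow_nonneg (by linarith) _)
  have hHmeas : Measurable H := by fun_prop
  -- integrability of H on (0,1]
  have hH1 : IntegrableOn H (Ioc (0:ℝ) 1) := by
    have hmaj : IntegrableOn (fun t : ℝ => lam ^ (θ-1) * t ^ (s/2-1)) (Ioc (0:ℝ) 1) := by
      have h := (intervalIntegral.intervalIntegrable_rpow' (show (-1:ℝ) < s/2-1 by linarith)
        (a := 0) (b := 1))
      rw [intervalIntegrable_iff_integrableOn_Ioc_of_le (by norm_num)] at h
      exact h.const_mul _
    refine Integrable.mono hmaj (hHmeas.aestronglyMeasurable.restrict) ?_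
    filter_upwards [self_mem_ae_restrict measurableSet_Ioc] with t ht
    obtain ⟨ht0, ht1⟩ := ht
    rw [Real.norm_eq_abs, Real.norm_eq_abs, abs_of_nonneg (hH0 t ht0)]
    have h1 : (lam + t) ^ (θ-1) ≤ lam ^ (θ-1) :=
      Real.rpow_le_rpow_of_nonpos hlam (by linarith) (by linarith)
    have h2 : t ^ (s/2-1) * φ t * (lam+t)^(θ-1) ≤ t ^ (s/2-1) * 1 * lam ^ (θ-1) := by
      have ha := Real.rpow_nonneg ht0.le (s/2-1)
      have hd := Real.rpow_nonneg (show (0:ℝ) ≤ lam + t by linarith) (θ-1)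
      have hA : t ^ (s/2-1) * φ t ≤ t ^ (s/2-1) * 1 :=
        mul_le_mul_of_nonneg_left (hφ1 t ht0.le) ha
      exact mul_le_mul hA h1 hd (by
        have := mul_nonneg ha (zero_le_one (α := ℝ)); linarith)
    calc H t ≤ t ^ (s/2-1) * 1 * lam ^ (θ-1) := h2
      _ = lam ^ (θ-1) * t ^ (s/2-1) := by ring
      _ ≤ |lam ^ (θ-1) * t ^ (s/2-1)| := le_abs_self _
  -- integrability of H on (1,∞)
  have hH2 : IntegrableOn H (Ioi (1:ℝ)) := by
    have hmaj : IntegrableOn (fun t : ℝ => K * t ^ (s/2 + θ - 5/2)) (Ioi (1:ℝ)) :=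
      (integrableOn_Ioi_rpow_of_lt (by linarith) one_pos).const_mul _
    refine Integrable.mono hmaj (hHmeas.aestronglyMeasurable.restrict) ?_
    filter_upwards [self_mem_ae_restrict measurableSet_Ioi] with t ht
    have ht0 : (0:ℝ) < t := lt_trans one_pos ht
    rw [Real.norm_eq_abs, Real.norm_eq_abs, abs_of_nonneg (hH0 t ht0)]
    have h1 : (lam + t) ^ (θ-1) ≤ t ^ (θ-1) :=
      Real.rpow_le_rpow_of_nonpos ht0 (by linarith) (by linarith)
    have h2 : H t ≤ t ^ (s/2-1) * (K * t ^ (-(1:ℝ)/2)) * t ^ (θ-1) := by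
      have ha := Real.rpow_nonneg ht0.le (s/2-1)
      have hb := hφ0 t ht0.le
      have hc := hφ2 t ht0
      have hd := Real.rpow_nonneg (show (0:ℝ) ≤ lam + t by linarith) (θ-1)
      have he := Real.rpow_nonneg ht0.le (θ-1)
      have hf := Real.rpow_nonneg ht0.le (-(1:ℝ)/2)
      have hA : t ^ (s/2-1) * φ t ≤ t ^ (s/2-1) * (K * t ^ (-(1:ℝ)/2)) :=
        mul_le_mul_of_nonneg_left hc ha
      exact mul_le_mul hA h1 hd (mul_nonneg ha (mul_nonneg hK0 hf))
    have h3 : t ^ (s/2-1) * (K * t ^ (-(1:ℝ)/2)) * t ^ (θ-1)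
        = K * t ^ (s/2 + θ - 5/2) := by
      rw [show t ^ (s/2-1) * (K * t ^ (-(1:ℝ)/2)) * t ^ (θ-1)
          = K * (t ^ (s/2-1) * t ^ (-(1:ℝ)/2) * t ^ (θ-1)) by ring,
        ← Real.rpow_add ht0, ← Real.rpow_add ht0,
        show s/2-1 + -(1:ℝ)/2 + (θ-1) = s/2 + θ - 5/2 by ring]
    calc H t ≤ K * t ^ (s/2 + θ - 5/2) := by rw [← h3]; exact h2
      _ ≤ |K * t ^ (s/2 + θ - 5/2)| := le_abs_self _
  have HInt : IntegrableOn H (Ioi (0:ℝ)) := by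
    rw [show Ioi (0:ℝ) = Ioc 0 1 ∪ Ioi 1 from (Ioc_union_Ioi_eq_Ioi zero_le_one).symm]
    exact hH1.union hH2
  set C : ℝ := ∫ t in Ioi (0:ℝ), H t with hCdef
  have hC0 : 0 ≤ C := setIntegral_nonneg measurableSet_Ioi fun t ht => hH0 t ht
  -- pointwise bound on the inner integral
  have hbound : ∀ p : EuclideanSpace ℝ (Fin 3),
      |∫ t in Ioi (0:ℝ), t ^ (s/2-1) * φ t / (‖p‖^2 + lam + t)|
        ≤ C * (‖p‖^2 + lam) ^ (-θ) := by
    intro p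
    set M : ℝ := ‖p‖^2 + lam with hMdef
    have hM : 0 < M := by positivity
    have hMl : lam ≤ M := by nlinarith [sq_nonneg ‖p‖]
    have hfnn : ∀ t : ℝ, 0 < t → 0 ≤ t ^ (s/2-1) * φ t / (M + t) := by
      intro t ht
      exact div_nonneg (mul_nonneg (Real.rpow_nonneg ht.le _) (hφ0 t ht.le))
        (by linarith)
    have hkey : ∀ t : ℝ, 0 < t →
        t ^ (s/2-1) * φ t / (M + t) ≤ M ^ (-θ) * H t := by
      intro t ht
      have hlt : (0:ℝ) < lam + t := by linarith
      have hden : M ^ θ * (lam + t) ^ (1-θ) ≤ M + t := by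
        calc M ^ θ * (lam + t) ^ (1-θ)
            ≤ (M + t) ^ θ * (M + t) ^ (1-θ) := by
              apply mul_le_mul (Real.rpow_le_rpow hM.le (by linarith) hθ0)
                (Real.rpow_le_rpow hlt.le (by linarith) (by linarith))
                (Real.rpow_nonneg hlt.le _) (Real.rpow_nonneg (by linarith) _)
          _ = M + t := by
              rw [← Real.rpow_add (by linarith)]; norm_num
      have hdpos : 0 < M ^ θ * (lam + t) ^ (1-θ) :=
        mul_pos (Real.rpow_pos_of_pos hM _) (Real.rpow_pos_of_pos hlt _)
      have hnum : 0 ≤ t ^ (s/2-1) * φ t :=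
        mul_nonneg (Real.rpow_nonneg ht.le _) (hφ0 t ht.le)
      calc t ^ (s/2-1) * φ t / (M + t)
          ≤ t ^ (s/2-1) * φ t / (M ^ θ * (lam + t) ^ (1-θ)) :=
            div_le_div_of_nonneg_left hnum hdpos hden
        _ = M ^ (-θ) * H t := by
            simp only [hHdef]
            rw [Real.rpow_neg hM.le, show θ - 1 = -(1-θ) by ring,
              Real.rpow_neg hlt.le, div_eq_mul_inv, mul_inv]
            ring
    have hI1 : (∫ t in Ioi (0:ℝ), t ^ (s/2-1) * φ t / (M + t))
        ≤ ∫ t in Ioi (0:ℝ), M ^ (-θ) * H t := by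
      refine integral_mono_of_nonneg ?_ (HInt.const_mul _) ?_
      · filter_upwards [self_mem_ae_restrict measurableSet_Ioi] with t ht
        exact hfnn t ht
      · filter_upwards [self_mem_ae_restrict measurableSet_Ioi] with t ht
        exact hkey t ht
    rw [abs_of_nonneg (setIntegral_nonneg measurableSet_Ioi fun t ht => hfnn t ht)]
    calc (∫ t in Ioi (0:ℝ), t ^ (s/2-1) * φ t / (M + t))
        ≤ ∫ t in Ioi (0:ℝ), M ^ (-θ) * H t := hI1
      _ = M ^ (-θ) * C := by rw [integral_const_mul]
      _ = C * M ^ (-θ) := mul_comm _ _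
  -- the L² majorant
  have hcont : Continuous fun p : EuclideanSpace ℝ (Fin 3) => (‖p‖^2 + lam) ^ (-θ) := by
    apply Continuous.rpow_const (by fun_prop)
    intro p; left; positivity
  have hint2 : Integrable (fun p : EuclideanSpace ℝ (Fin 3) =>
      ((‖p‖^2 + lam) ^ (-θ)) ^ 2) := by
    set m : ℝ := min lam 1 with hmdef
    have hm0 : 0 < m := lt_min hlam one_pos
    have hm1 : m ≤ 1 := min_le_right _ _
    have hml : m ≤ lam := min_le_left _ _
    have hfin : (3:ℝ) < 4 * θ := by linarith
    have hrank : ((Module.finrank ℝ (EuclideanSpace ℝ (Fin 3))) : ℝ) < 4 * θ := by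
      simp only [finrank_euclideanSpace, Fintype.card_fin]
      exact_mod_cast hfin
    have hmaj : Integrable (fun p : EuclideanSpace ℝ (Fin 3) =>
        (m/2) ^ (-(2*θ)) * (1 + ‖p‖) ^ (-(4*θ))) :=
      (integrable_one_add_norm hrank).const_mul _
    refine hmaj.mono ((hcont.pow 2).aestronglyMeasurable) ?_
    refine ae_of_all _ fun p => ?_
    have hM : (0:ℝ) < ‖p‖^2 + lam := by positivity
    have hn : (0:ℝ) ≤ ‖p‖ := norm_nonneg p
    have h1 : m/2 * (1 + ‖p‖)^2 ≤ ‖p‖^2 + lam := by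
      nlinarith [sq_nonneg (1 - ‖p‖), hm0.le]
    have h1' : (0:ℝ) < m/2 * (1 + ‖p‖)^2 := by positivity
    have h2 : (‖p‖^2 + lam) ^ (-(2*θ)) ≤ (m/2 * (1 + ‖p‖)^2) ^ (-(2*θ)) :=
      Real.rpow_le_rpow_of_nonpos h1' h1 (by linarith)
    have h3 : (m/2 * (1 + ‖p‖)^2) ^ (-(2*θ))
        = (m/2) ^ (-(2*θ)) * (1 + ‖p‖) ^ (-(4*θ)) := by
      rw [Real.mul_rpow (by positivity) (by positivity),
        ← Real.rpow_natCast (1 + ‖p‖) 2, ← Real.rpow_mul (by positivity)]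
      congr 1
      push_cast
      ring_nf
    have h4 : ((‖p‖^2 + lam) ^ (-θ)) ^ 2 = (‖p‖^2 + lam) ^ (-(2*θ)) := by
      rw [← Real.rpow_natCast ((‖p‖^2 + lam) ^ (-θ)) 2, ← Real.rpow_mul hM.le]
      congr 1
      push_cast
      ring_nf
    rw [Real.norm_eq_abs, Real.norm_eq_abs, h4,
      abs_of_nonneg (Real.rpow_nonneg hM.le _), ← h3,
      abs_of_nonneg (Real.rpow_nonneg h1'.le _)]
    exact h2
  have hbase : MemLp (fun p : EuclideanSpace ℝ (Fin 3) => (‖p‖^2 + lam) ^ (-θ))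
      2 volume :=
    (memLp_two_iff_integrable_sq hcont.aestronglyMeasurable).2 hint2
  have hg : MemLp (fun p : EuclideanSpace ℝ (Fin 3) =>
      C * (‖p‖^2 + lam) ^ (-θ)) 2 volume := hbase.const_mul C
  -- measurability of the inner integral
  have hImeas : AEStronglyMeasurable (fun p : EuclideanSpace ℝ (Fin 3) =>
      ∫ t in Ioi (0:ℝ), t ^ (s/2-1) * φ t / (‖p‖^2 + lam + t)) volume := by
    have hm : StronglyMeasurable (Function.uncurry
        (fun (p : EuclideanSpace ℝ (Fin 3)) (t : ℝ) =>
          t ^ (s/2-1) * φ t / (‖p‖^2 + lam + t))) := by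
      apply Measurable.stronglyMeasurable
      fun_prop
    exact (hm.integral_prod_right).aestronglyMeasurable
  have hI : MemLp (fun p : EuclideanSpace ℝ (Fin 3) =>
      ∫ t in Ioi (0:ℝ), t ^ (s/2-1) * φ t / (‖p‖^2 + lam + t)) 2 volume := by
    refine hg.of_le hImeas (ae_of_all _ fun p => ?_)
    rw [Real.norm_eq_abs, Real.norm_eq_abs]
    exact (hbound p).trans (le_abs_self _)
  exact hI.const_mul _
end
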